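/- arXiv:1710.07858 — 2 statements merged into one kernel-verified Lean document; each statement's English description precedes it below -/
import Mathlib

section
/- Assume V(x) = ½‖∇ψ(x)‖² is convex and Crit_ψ ≠ ∅, and let v be a strongly evanescent solution of the second-order gradient system (DS-2). Then: (i) for every x̂ ∈ Crit_ψ the function t ↦ ‖v(t) − x̂‖ is nonincreasing; (ii) v is bounded on [0, ∞); (iii) there exists x̂⋆ ∈ Crit_ψ such that v(t) converges weakly to x̂⋆ as t → ∞ (i.e. ⟨v(t), y⟩ → ⟨x̂⋆, y⟩ for every y ∈ H). -/
open Filter MeasureTheory Set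

local notation "⟪" x ", " y "⟫" => @inner ℝ _ _ x y

section Aux
variable {H : Type*} [NormedAddCommGroup H] [InnerProductSpace ℝ H] [CompleteSpace H]

private lemma monoIci {f f' : ℝ → ℝ} {a : ℝ}
    (hd : ∀ t ∈ Ici a, HasDerivWithinAt f (f' t) (Ici a) t)
    (h0 : ∀ t ∈ Ici a, 0 ≤ f' t) : MonotoneOn f (Ici a) := by
  refine monotoneOn_of_hasDerivWithinAt_nonneg (convex_Ici a)
    (fun t ht => (hd t ht).continuousWithinAt) (fun t ht => ?_)
    (fun t ht => h0 t (interior_subset ht))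
  exact (hd t (interior_subset ht)).mono interior_subset

private lemma antiIci {f f' : ℝ → ℝ} {a : ℝ}
    (hd : ∀ t ∈ Ici a, HasDerivWithinAt f (f' t) (Ici a) t)
    (h0 : ∀ t ∈ Ici a, f' t ≤ 0) : AntitoneOn f (Ici a) := by
  refine antitoneOn_of_hasDerivWithinAt_nonpos (convex_Ici a)
    (fun t ht => (hd t ht).continuousWithinAt) (fun t ht => ?_)
    (fun t ht => h0 t (interior_subset ht))
  exact (hd t (interior_subset ht)).mono interior_subset

private lemma convex_grad_ineq {V : H → ℝ} (hVconv : ConvexOn ℝ univ V) {x g : H}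
    (hg : HasGradientAt V g x) (y : H) : ⟪g, y - x⟫ ≤ V y - V x := by
  have hcurve : HasDerivAt (fun s : ℝ => x + s • (y - x)) (y - x) 0 := by
    simpa using ((hasDerivAt_id (0:ℝ)).smul_const (y - x)).const_add x
  have hφ : HasDerivAt (fun s : ℝ => V (x + s • (y - x))) ⟪g, y - x⟫ 0 := by
    have hg' : HasFDerivAt V ((InnerProductSpace.toDual ℝ H) g) ((fun s : ℝ => x + s • (y - x)) 0) := by
      simpa using hasGradientAt_iff_hasFDerivAt.1 hg
    have := hg'.comp_hasDerivAt 0 hcurve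
    simpa [InnerProductSpace.toDual_apply_apply, Function.comp_def] using this
  have hslope : Tendsto (slope (fun s : ℝ => V (x + s • (y - x))) 0)
      (nhdsWithin 0 (Ioi 0)) (nhds ⟪g, y - x⟫) := by
    have := hasDerivAt_iff_tendsto_slope.1 hφ
    exact this.mono_left (nhdsWithin_mono _ (fun s hs => ne_of_gt hs))
  refine le_of_tendsto hslope ?_
  filter_upwards [Ioc_mem_nhdsGT_of_mem (by norm_num : (0:ℝ) ∈ Ico (0:ℝ) 1)] with s hs
  rcases hs with ⟨hs0, hs1⟩
  have hconv := hVconv.2 (mem_univ x) (mem_univ y) (by linarith : (0:ℝ) ≤ 1 - s)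
    (le_of_lt hs0) (by ring)
  have hxy : (1 - s) • x + s • y = x + s • (y - x) := by
    simp [smul_sub, sub_smul, one_smul]; abel
  rw [hxy] at hconv
  rw [smul_eq_mul, smul_eq_mul] at hconv
  have hb : V (x + s • (y - x)) - V x ≤ s * (V y - V x) := by nlinarith
  have h0 : (fun s : ℝ => V (x + s • (y - x))) 0 = V x := by simp
  rw [slope_def_field]
  simp only [zero_smul, add_zero, sub_zero]
  rw [div_le_iff₀ hs0]
  linarith

private lemma grow_of_deriv_ge {f f' : ℝ → ℝ} {t₀ a : ℝ} (ht₀ : 0 ≤ t₀)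
    (hd : ∀ t ∈ Ici (0:ℝ), HasDerivWithinAt f (f' t) (Ici 0) t)
    (hge : ∀ t, t₀ ≤ t → a ≤ f' t) :
    ∀ T, t₀ ≤ T → f t₀ + a * (T - t₀) ≤ f T := by
  intro T hT
  have hsub : Icc t₀ T ⊆ Ici (0:ℝ) := fun y hy => le_trans ht₀ hy.1
  have hC : ContinuousOn f (Ici 0) := fun t ht => (hd t ht).continuousWithinAt
  have h1 := intervalIntegral.integral_le_sub_of_hasDeriv_right_of_le hT
    (hC.mono hsub)
    (fun s hs => (hd s (le_trans ht₀ hs.1.le)).mono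
      (fun y (hy : s < y) => le_of_lt (lt_of_le_of_lt (le_trans ht₀ hs.1.le) hy)))
    (integrableOn_const measure_Icc_lt_top.ne)
    (fun s hs => hge s hs.1.le)
  rw [intervalIntegral.integral_const, smul_eq_mul] at h1
  linarith

private lemma weak_compact {x : ℕ → H} {M : ℝ} (hM : ∀ n, ‖x n‖ ≤ M) :
    ∃ (φ : ℕ → ℕ) (z : H), StrictMono φ ∧
      ∀ y : H, Tendsto (fun n => ⟪x (φ n), y⟫) atTop (nhds ⟪z, y⟫) := by
  -- Step 1: diagonal extraction via compactness of a product of intervals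
  set Y : ℕ → (ℕ → ℝ) := fun n m => ⟪x n, x m⟫ with hY
  have hK : IsCompact (univ.pi fun m : ℕ => Icc (-(M * ‖x m‖)) (M * ‖x m‖)) :=
    isCompact_univ_pi fun m => isCompact_Icc
  have hmem : ∀ n, Y n ∈ (univ.pi fun m : ℕ => Icc (-(M * ‖x m‖)) (M * ‖x m‖)) := by
    intro n m _
    have h1 : |⟪x n, x m⟫| ≤ M * ‖x m‖ := by
      refine (abs_real_inner_le_norm _ _).trans ?_
      exact mul_le_mul_of_nonneg_right (hM n) (norm_nonneg _)
    exact abs_le.1 h1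
  obtain ⟨L, -, φ, hφmono, hφlim⟩ := hK.isSeqCompact hmem
  have hcoord : ∀ m, Tendsto (fun n => ⟪x (φ n), x m⟫) atTop (nhds (L m)) := by
    intro m
    have := tendsto_pi_nhds.1 hφlim m
    exact this
  -- Step 2: the set of `z` for which the inner products converge
  set S : Set H := {z : H | ∃ c : ℝ, Tendsto (fun n => ⟪x (φ n), z⟫) atTop (nhds c)} with hS
  have hSx : ∀ m, x m ∈ S := fun m => ⟨L m, hcoord m⟩
  have hSspan : ∀ z ∈ Submodule.span ℝ (range x), z ∈ S := by
    intro z hz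
    induction hz using Submodule.span_induction with
    | mem w hw => obtain ⟨m, rfl⟩ := hw; exact hSx m
    | zero => exact ⟨0, by simpa using tendsto_const_nhds⟩
    | add a b _ _ ha hb =>
        obtain ⟨ca, hca⟩ := ha; obtain ⟨cb, hcb⟩ := hb
        exact ⟨ca + cb, by simpa [inner_add_right] using hca.add hcb⟩
    | smul r a _ ha =>
        obtain ⟨ca, hca⟩ := ha
        exact ⟨r * ca, by simpa [inner_smul_right] using hca.const_mul r⟩
  have hSclosed : ∀ z ∈ closure (Submodule.span ℝ (range x) : Set H), z ∈ S := by
    intro z hz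
    have hcauchy : CauchySeq (fun n => ⟪x (φ n), z⟫) := by
      rw [Metric.cauchySeq_iff]
      intro ε hε
      have hM0 : (0:ℝ) ≤ M := le_trans (norm_nonneg _) (hM 0)
      obtain ⟨z', hz'S, hz'close⟩ := Metric.mem_closure_iff.1 hz (ε / (3 * (M + 1)))
        (by positivity)
      obtain ⟨c, hc⟩ := hSspan z' hz'S
      have hCc : CauchySeq (fun n => ⟪x (φ n), z'⟫) := hc.cauchySeq
      rw [Metric.cauchySeq_iff] at hCc
      obtain ⟨N, hN⟩ := hCc (ε / 3) (by positivity)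
      refine ⟨N, fun m hm n hn => ?_⟩
      have hbound : ∀ k, |⟪x (φ k), z⟫ - ⟪x (φ k), z'⟫| ≤ M * ‖z - z'‖ := by
        intro k
        rw [← inner_sub_right]
        refine (abs_real_inner_le_norm _ _).trans ?_
        exact mul_le_mul_of_nonneg_right (hM _) (norm_nonneg _)
      have hzz' : M * ‖z - z'‖ < ε / 3 := by
        have h1 : ‖z - z'‖ < ε / (3 * (M + 1)) := by
          rw [← dist_eq_norm]; exact hz'close
        have h2 : M * ‖z - z'‖ ≤ (M+1) * ‖z - z'‖ :=
          mul_le_mul_of_nonneg_right (by linarith) (norm_nonneg _)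
        have h3 : (M+1) * ‖z - z'‖ < (M+1) * (ε / (3 * (M + 1))) :=
          mul_lt_mul_of_pos_left h1 (by linarith)
        have h4 : (M+1) * (ε / (3 * (M + 1))) = ε / 3 := by
          field_simp
        linarith
      have := hN m hm n hn
      rw [Real.dist_eq] at this ⊢
      calc |⟪x (φ m), z⟫ - ⟪x (φ n), z⟫|
          ≤ |⟪x (φ m), z⟫ - ⟪x (φ m), z'⟫| + |⟪x (φ m), z'⟫ - ⟪x (φ n), z'⟫|
            + |⟪x (φ n), z'⟫ - ⟪x (φ n), z⟫| := by
              have := abs_sub_le (⟪x (φ m), z⟫) (⟪x (φ m), z'⟫) (⟪x (φ n), z⟫)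
              have h2 := abs_sub_le (⟪x (φ m), z'⟫) (⟪x (φ n), z'⟫) (⟪x (φ n), z⟫)
              linarith
        _ < ε := by
              have hb1 := hbound m
              have hb2 := hbound n
              rw [abs_sub_comm] at hb2
              linarith
    obtain ⟨c, hc⟩ := cauchySeq_tendsto_of_complete hcauchy
    exact ⟨c, hc⟩
  -- Step 3: all of `H` via orthogonal projection
  set K : Submodule ℝ H := (Submodule.span ℝ (range x)).topologicalClosure with hKdef
  have hxK : ∀ n, x n ∈ K :=
    fun n => Submodule.le_topologicalClosure _ (Submodule.subset_span ⟨n, rfl⟩)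
  have hall : ∀ z : H, ∃ c : ℝ, Tendsto (fun n => ⟪x (φ n), z⟫) atTop (nhds c) := by
    intro z
    obtain ⟨p, hp, q, hq, rfl⟩ := K.exists_add_mem_mem_orthogonal z
    obtain ⟨c, hc⟩ := hSclosed p (by rw [← Submodule.topologicalClosure_coe]; exact hp)
    refine ⟨c, ?_⟩
    have hzero : ∀ n, ⟪x (φ n), q⟫ = 0 := fun n =>
      (Submodule.mem_orthogonal K q).1 hq _ (hxK (φ n))
    simpa [inner_add_right, hzero] using hc
  -- Step 4: build the limit functional and apply Riesz
  choose c hc using hall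
  have hcadd : ∀ z w : H, c (z + w) = c z + c w := fun z w =>
    tendsto_nhds_unique (hc (z + w)) (by simpa [inner_add_right] using (hc z).add (hc w))
  have hcsmul : ∀ (r : ℝ) (z : H), c (r • z) = r * c z := fun r z =>
    tendsto_nhds_unique (hc (r • z)) (by simpa [inner_smul_right] using (hc z).const_mul r)
  have hcbound : ∀ z : H, |c z| ≤ M * ‖z‖ := by
    intro z
    have : Tendsto (fun n => |⟪x (φ n), z⟫|) atTop (nhds (|c z|)) := (hc z).abs
    refine le_of_tendsto this (Eventually.of_forall fun n => ?_)
    exact (abs_real_inner_le_norm _ _).trans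
      (mul_le_mul_of_nonneg_right (hM _) (norm_nonneg _))
  let F : H →ₗ[ℝ] ℝ :=
    { toFun := c, map_add' := hcadd, map_smul' := hcsmul }
  let Fc : H →L[ℝ] ℝ := F.mkContinuous M fun z => by
    simpa [F, Real.norm_eq_abs] using hcbound z
  refine ⟨φ, (InnerProductSpace.toDual ℝ H).symm Fc, hφmono, fun y => ?_⟩
  have : ⟪(InnerProductSpace.toDual ℝ H).symm Fc, y⟫ = Fc y :=
    InnerProductSpace.toDual_symm_apply
  rw [this]
  exact hc y

end Aux

set_option maxHeartbeats 1000000 in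
/-- Lemma 8: if `V = ½‖∇ψ‖²` is convex, `Crit ψ ≠ ∅` and `v` is a strongly evanescent
solution of `v'' = ∇V(v)`, then: (i) `t ↦ ‖v t - x̂‖` is nonincreasing for every
`x̂ ∈ Crit ψ`; (ii) `v` is bounded on `[0, ∞)`; (iii) `v(t)` converges weakly to some
`x̂⋆ ∈ Crit ψ` as `t → ∞`. -/
theorem stmt_17 {H : Type*} [NormedAddCommGroup H] [InnerProductSpace ℝ H] [CompleteSpace H]
    (ψ : H → ℝ) (hψ : ContDiff ℝ 2 ψ)
    (V : H → ℝ) (hV : V = fun x => (1/2 : ℝ) * ‖gradient ψ x‖ ^ 2)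
    (hVconv : ConvexOn ℝ univ V)
    (hcrit : {x : H | gradient ψ x = 0}.Nonempty)
    (v v' : ℝ → H)
    (hv : ∀ t ∈ Ici (0:ℝ), HasDerivWithinAt v (v' t) (Ici 0) t)
    (hv' : ∀ t ∈ Ici (0:ℝ), HasDerivWithinAt v' (gradient V (v t)) (Ici 0) t)
    (hev : IntegrableOn (fun t => ‖v' t‖ ^ 2 + V (v t)) (Ioi 0)) :
    (∀ xhat : H, gradient ψ xhat = 0 → AntitoneOn (fun t => ‖v t - xhat‖) (Ici 0)) ∧
      (∃ M : ℝ, ∀ t ≥ (0:ℝ), ‖v t‖ ≤ M) ∧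
      (∃ xstar : H, gradient ψ xstar = 0 ∧
        ∀ y : H, Tendsto (fun t => (inner ℝ (v t) y : ℝ)) atTop (nhds (inner ℝ xstar y))) := by
  obtain ⟨x₀, hx₀⟩ := hcrit
  -- basic facts about V
  have hV0 : ∀ x, 0 ≤ V x := by intro x; rw [hV]; positivity
  have hVcrit : ∀ x : H, gradient ψ x = 0 → V x = 0 := by
    intro x hx; rw [hV]; simp [hx]
  have hVzero : ∀ x : H, V x = 0 → gradient ψ x = 0 := by
    intro x hx
    rw [hV] at hx
    simp only [one_div] at hx
    have : ‖gradient ψ x‖ ^ 2 = 0 := by linarith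
    simpa [pow_eq_zero_iff] using this
  -- differentiability of V
  have hVdiff : ∀ x : H, DifferentiableAt ℝ V x := by
    intro x
    have hψg : Differentiable ℝ (gradient ψ) := by
      have h1 : ContDiff ℝ 1 (fderiv ℝ ψ) := hψ.fderiv_right (by norm_num)
      have h2 : ContDiff ℝ 1 (gradient ψ) := by
        have : (gradient ψ) = fun x =>
            (InnerProductSpace.toDual ℝ H).symm (fderiv ℝ ψ x) := rfl
        rw [this]
        exact (InnerProductSpace.toDual ℝ H).symm.toContinuousLinearEquiv.contDiff.comp h1
      exact h2.differentiable one_ne_zero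
    rw [hV]
    exact ((hψg x).norm_sq ℝ).const_mul _
  have hgrad : ∀ x : H, HasGradientAt V (gradient V x) x :=
    fun x => (hVdiff x).hasGradientAt
  have hkey : ∀ x y : H, ⟪gradient V x, y - x⟫ ≤ V y - V x :=
    fun x y => convex_grad_ineq hVconv (hgrad x) y
  have hmono2 : ∀ x y : H, 0 ≤ ⟪gradient V x - gradient V y, x - y⟫ := by
    intro x y
    have h1 := hkey x y
    have h2 := hkey y x
    have e1 : ⟪gradient V x - gradient V y, x - y⟫
        = ⟪gradient V x, x - y⟫ - ⟪gradient V y, x - y⟫ := inner_sub_left _ _ _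
    have e2 : ⟪gradient V x, x - y⟫ = -⟪gradient V x, y - x⟫ := by
      rw [← inner_neg_right]; congr 1; abel
    rw [e1, e2]
    linarith
  -- continuity facts
  have hvC : ContinuousOn v (Ici 0) := fun t ht => (hv t ht).continuousWithinAt
  have hv'C : ContinuousOn v' (Ici 0) := fun t ht => (hv' t ht).continuousWithinAt
  set w : ℝ → ℝ := fun t => ‖v' t‖ ^ 2 with hw
  have hwC : ContinuousOn w (Ici 0) := (hv'C.norm).pow 2
  have hVC : Continuous V := by
    have : Differentiable ℝ V := hVdiff
    exact this.continuous
  have hVvC : ContinuousOn (fun t => V (v t)) (Ici 0) := hVC.comp_continuousOn hvC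
  -- integrability
  have hw_int : IntegrableOn w (Ioi 0) := by
    refine Integrable.mono' hev ((hwC.mono Ioi_subset_Ici_self).aestronglyMeasurable
      measurableSet_Ioi) (Eventually.of_forall fun t => ?_)
    have h1 : 0 ≤ w t := sq_nonneg _
    have h2 : 0 ≤ V (v t) := hV0 _
    rw [Real.norm_eq_abs, abs_of_nonneg h1]
    simp only [w]
    linarith
  have hVv_int : IntegrableOn (fun t => V (v t)) (Ioi 0) := by
    refine Integrable.mono' hev ((hVvC.mono Ioi_subset_Ici_self).aestronglyMeasurable
      measurableSet_Ioi) (Eventually.of_forall fun t => ?_)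
    have h1 : 0 ≤ ‖v' t‖ ^ 2 := sq_nonneg _
    have h2 : 0 ≤ V (v t) := hV0 _
    rw [Real.norm_eq_abs, abs_of_nonneg h2]
    linarith
  set I : ℝ := ∫ t in Ioi (0:ℝ), w t with hI
  have hI0 : 0 ≤ I := setIntegral_nonneg measurableSet_Ioi fun t _ => sq_nonneg _
  -- Part (i)
  have parti : ∀ xhat : H, gradient ψ xhat = 0 →
      AntitoneOn (fun t => ‖v t - xhat‖) (Ici 0) := by
    intro xhat hxhat
    have hVxhat : V xhat = 0 := hVcrit _ hxhat
    set p : ℝ → ℝ := fun t => ⟪v' t, v t - xhat⟫ with hp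
    set q : ℝ → ℝ := fun t => ⟪v t - xhat, v t - xhat⟫ with hq
    have hp' : ∀ t ∈ Ici (0:ℝ), HasDerivWithinAt p
        (⟪v' t, v' t⟫ + ⟪gradient V (v t), v t - xhat⟫) (Ici 0) t :=
      fun t ht => (hv' t ht).inner ℝ ((hv t ht).sub_const xhat)
    have hq' : ∀ t ∈ Ici (0:ℝ), HasDerivWithinAt q (2 * p t) (Ici 0) t := by
      intro t ht
      have h1 := ((hv t ht).sub_const xhat).inner ℝ ((hv t ht).sub_const xhat)
      have h2 : (⟪v t - xhat, v' t⟫ + ⟪v' t, v t - xhat⟫ : ℝ) = 2 * p t := by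
        simp only [hp]
        linarith [real_inner_comm (v t - xhat) (v' t)]
      exact h2 ▸ h1
    have hp'nonneg : ∀ t ∈ Ici (0:ℝ),
        0 ≤ ⟪v' t, v' t⟫ + ⟪gradient V (v t), v t - xhat⟫ := by
      intro t ht
      have h1 : (0:ℝ) ≤ ⟪v' t, v' t⟫ := real_inner_self_nonneg
      have h2 : ⟪gradient V (v t), xhat - v t⟫ ≤ V xhat - V (v t) := hkey (v t) xhat
      have h3 : (⟪gradient V (v t), v t - xhat⟫:ℝ) = -⟪gradient V (v t), xhat - v t⟫ := by
        rw [← inner_neg_right]; congr 1; abel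
      have h4 := hV0 (v t)
      rw [h3]; linarith
    have hpmono : MonotoneOn p (Ici 0) := monoIci hp' hp'nonneg
    -- the key claim : p ≤ 0 on [0,∞)
    have hple : ∀ t ∈ Ici (0:ℝ), p t ≤ 0 := by
      by_contra hcon
      push_neg at hcon
      obtain ⟨t₀, ht₀, hpt₀⟩ := hcon
      set a : ℝ := p t₀ with ha
      have ha0 : 0 < a := hpt₀
      have hq_pos : 0 < q t₀ := by
        by_contra h
        push_neg at h
        have h0 : q t₀ = 0 := le_antisymm h real_inner_self_nonneg
        have h1 : v t₀ - xhat = 0 := by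
          have := inner_self_eq_zero (𝕜 := ℝ) (x := v t₀ - xhat)
          exact this.1 h0
        have : p t₀ = 0 := by simp [hp, h1]
        rw [ha] at ha0; linarith
      have hqC : ContinuousOn q (Ici 0) := fun t ht => (hq' t ht).continuousWithinAt
      -- growth of q
      have hgrow : ∀ T, t₀ ≤ T → q t₀ + 2*a*(T - t₀) ≤ q T := by
        intro T hT
        have hsub : Icc t₀ T ⊆ Ici (0:ℝ) := fun y hy => le_trans ht₀ hy.1
        have h1 := intervalIntegral.integral_le_sub_of_hasDeriv_right_of_le hT
          (hqC.mono hsub)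
          (fun s hs => (hq' s (le_trans ht₀ hs.1.le)).mono
            (fun y (hy : s < y) => le_of_lt (lt_of_le_of_lt (le_trans ht₀ hs.1.le) hy)))
          (integrableOn_const (C := 2*a) measure_Icc_lt_top.ne)
          (fun s hs => by
            have h5 : a ≤ p s := hpmono ht₀ (le_trans ht₀ hs.1.le) hs.1.le
            show 2*a ≤ 2 * p s
            linarith)
        rw [intervalIntegral.integral_const, smul_eq_mul] at h1
        linarith
      have hq_pos_T : ∀ T, t₀ ≤ T → 0 < q T := by
        intro T hT
        have := hgrow T hT
        nlinarith
      -- logarithmic bound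
      set B : ℝ := 2 / a * I with hB
      have hlog : ∀ T, t₀ ≤ T → Real.log (q T) - Real.log (q t₀) ≤ B := by
        intro T hT
        have hsub : Icc t₀ T ⊆ Ici (0:ℝ) := fun y hy => le_trans ht₀ hy.1
        have hd : ∀ s ∈ Ioo t₀ T, HasDerivWithinAt (fun u => Real.log (q u))
            ((q s)⁻¹ * (2 * p s)) (Ioi s) s := by
          intro s hs
          have hs0 : s ∈ Ici (0:ℝ) := le_trans ht₀ hs.1.le
          have hqs : q s ≠ 0 := ne_of_gt (hq_pos_T s hs.1.le)
          exact (Real.hasDerivAt_log hqs).comp_hasDerivWithinAt s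
            ((hq' s hs0).mono (fun y (hy : s < y) => le_of_lt (lt_of_le_of_lt hs0 hy)))
        have hcont : ContinuousOn (fun u => Real.log (q u)) (Icc t₀ T) :=
          (hqC.mono hsub).log (fun s hs => ne_of_gt (hq_pos_T s hs.1))
        have hφint : IntegrableOn (fun s => 2 / a * w s) (Icc t₀ T) :=
          ((hwC.mono hsub).integrableOn_Icc).const_mul _
        have hbound : ∀ s ∈ Ioo t₀ T, (q s)⁻¹ * (2 * p s) ≤ 2 / a * w s := by
          intro s hs
          have hs0 : s ∈ Ici (0:ℝ) := le_trans ht₀ hs.1.le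
          have hps : a ≤ p s := hpmono ht₀ hs0 hs.1.le
          have hqs : 0 < q s := hq_pos_T s hs.1.le
          have hCS : p s * p s ≤ w s * q s := by
            have h1 : p s ≤ ‖v' s‖ * ‖v s - xhat‖ := real_inner_le_norm _ _
            have h2 : q s = ‖v s - xhat‖ ^ 2 := real_inner_self_eq_norm_sq _
            have h3 : w s = ‖v' s‖ ^ 2 := rfl
            rw [h2, h3]
            nlinarith [norm_nonneg (v' s), norm_nonneg (v s - xhat), ha0.trans_le hps]
          have e1 : (q s)⁻¹ * (2 * p s) = 2 * p s / q s := by ring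
          have e2 : 2 / a * w s = 2 * w s / a := by ring
          rw [e1, e2, div_le_div_iff₀ hqs ha0]
          nlinarith [ha0.trans_le hps]
        have h1 := intervalIntegral.sub_le_integral_of_hasDeriv_right_of_le hT hcont hd
          hφint hbound
        have h2 : (∫ s in t₀..T, 2 / a * w s) ≤ B := by
          rw [intervalIntegral.integral_const_mul]
          have h3 : (∫ s in t₀..T, w s) = ∫ s in Ioc t₀ T, w s :=
            intervalIntegral.integral_of_le hT
          have h4 : (∫ s in Ioc t₀ T, w s) ≤ I := by
            refine setIntegral_mono_set hw_int ?_ ?_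
            · exact Eventually.of_forall fun t => sq_nonneg _
            · exact HasSubset.Subset.eventuallyLE (fun y hy => lt_of_le_of_lt ht₀ hy.1)
          have h5 : (0:ℝ) ≤ 2 / a := by positivity
          calc 2 / a * ∫ s in t₀..T, w s ≤ 2 / a * I := by
                rw [h3]; exact mul_le_mul_of_nonneg_left h4 h5
            _ = B := rfl
        linarith
      -- contradiction
      set T : ℝ := t₀ + (q t₀ * Real.exp B) / (2*a) + 1 with hT
      have hTge : t₀ ≤ T := by
        have h1 : 0 ≤ (q t₀ * Real.exp B) / (2*a) := by positivity
        rw [hT]; linarith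
      have h1 := hgrow T hTge
      have h2 := hlog T hTge
      have h3 : q T ≤ q t₀ * Real.exp B := by
        have hqT : 0 < q T := hq_pos_T T hTge
        calc q T = Real.exp (Real.log (q T)) := (Real.exp_log hqT).symm
          _ ≤ Real.exp (Real.log (q t₀) + B) := Real.exp_le_exp.2 (by linarith)
          _ = q t₀ * Real.exp B := by rw [Real.exp_add, Real.exp_log hq_pos]
      have h4 : 2*a*(T - t₀) = q t₀ * Real.exp B + 2*a := by
        rw [hT]
        field_simp
        ring
      linarith
    -- conclude antitonicity
    have hqanti : AntitoneOn q (Ici 0) := by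
      refine antiIci hq' (fun t ht => ?_)
      have := hple t ht
      linarith
    intro s hs t ht hst
    have h1 : q t ≤ q s := hqanti hs ht hst
    have h2 : q t = ‖v t - xhat‖ ^ 2 := real_inner_self_eq_norm_sq _
    have h3 : q s = ‖v s - xhat‖ ^ 2 := real_inner_self_eq_norm_sq _
    rw [h2, h3] at h1
    simp only []
    nlinarith [norm_nonneg (v t - xhat), norm_nonneg (v s - xhat)]
  -- Part (ii)
  set M : ℝ := ‖v 0 - x₀‖ + ‖x₀‖ with hMdef
  have hM : ∀ t ≥ (0:ℝ), ‖v t‖ ≤ M := by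
    intro t ht
    have h1 : ‖v t - x₀‖ ≤ ‖v 0 - x₀‖ := parti x₀ hx₀ self_mem_Ici ht ht
    calc ‖v t‖ = ‖(v t - x₀) + x₀‖ := by rw [sub_add_cancel]
      _ ≤ ‖v t - x₀‖ + ‖x₀‖ := norm_add_le _ _
      _ ≤ M := by rw [hMdef]; linarith
  have hM0 : 0 ≤ M := le_trans (norm_nonneg _) (hM 0 le_rfl)
  -- Part (iii), step 1 : ‖v'‖ is antitone on [0, ∞)
  have hv'anti : AntitoneOn (fun t => ‖v' t‖) (Ici 0) := by
    have hphi : ∀ h : ℝ, 0 < h → AntitoneOn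
        (fun t => (⟪v (t+h) - v t, v (t+h) - v t⟫ : ℝ)) (Ici 0) := by
      intro h hh
      set u : ℝ → H := fun t => v (t+h) - v t with hu
      set u' : ℝ → H := fun t => v' (t+h) - v' t with hu'
      have hadd : ∀ t ∈ Ici (0:ℝ), HasDerivWithinAt (fun s : ℝ => s + h) 1 (Ici 0) t :=
        fun t _ => (hasDerivWithinAt_id t _).add_const h
      have hmaps : MapsTo (fun s : ℝ => s + h) (Ici 0) (Ici 0) :=
        fun s hs => add_nonneg hs hh.le
      have hud : ∀ t ∈ Ici (0:ℝ), HasDerivWithinAt u (u' t) (Ici 0) t := by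
        intro t ht
        have h1 : HasDerivWithinAt (fun t => v (t+h)) (v' (t+h)) (Ici 0) t := by
          simpa [Function.comp_def] using (hv (t+h) (add_nonneg ht hh.le)).scomp t (hadd t ht) hmaps
        exact h1.sub (hv t ht)
      have hu'd : ∀ t ∈ Ici (0:ℝ), HasDerivWithinAt u'
          (gradient V (v (t+h)) - gradient V (v t)) (Ici 0) t := by
        intro t ht
        have h1 : HasDerivWithinAt (fun t => v' (t+h)) (gradient V (v (t+h))) (Ici 0) t := by
          simpa [Function.comp_def] using (hv' (t+h) (add_nonneg ht hh.le)).scomp t (hadd t ht) hmaps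
        exact h1.sub (hv' t ht)
      set k : ℝ → ℝ := fun t => ⟪u' t, u t⟫ with hk
      have hk' : ∀ t ∈ Ici (0:ℝ), HasDerivWithinAt k
          (⟪u' t, u' t⟫ + ⟪gradient V (v (t+h)) - gradient V (v t), u t⟫) (Ici 0) t :=
        fun t ht => (hu'd t ht).inner ℝ (hud t ht)
      have hk'nonneg : ∀ t ∈ Ici (0:ℝ),
          0 ≤ ⟪u' t, u' t⟫ + ⟪gradient V (v (t+h)) - gradient V (v t), u t⟫ := by
        intro t ht
        have h1 : (0:ℝ) ≤ ⟪u' t, u' t⟫ := real_inner_self_nonneg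
        have h2 : (0:ℝ) ≤ ⟪gradient V (v (t+h)) - gradient V (v t), u t⟫ :=
          hmono2 (v (t+h)) (v t)
        linarith
      have hkmono : MonotoneOn k (Ici 0) := monoIci hk' hk'nonneg
      have hphi' : ∀ t ∈ Ici (0:ℝ), HasDerivWithinAt (fun t => (⟪u t, u t⟫ : ℝ))
          (2 * k t) (Ici 0) t := by
        intro t ht
        have h1 := (hud t ht).inner ℝ (hud t ht)
        have h2 : (⟪u t, u' t⟫ + ⟪u' t, u t⟫ : ℝ) = 2 * k t := by
          simp only [hk]
          linarith [real_inner_comm (u t) (u' t)]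
        exact h2 ▸ h1
      have hkle : ∀ t ∈ Ici (0:ℝ), k t ≤ 0 := by
        by_contra hcon
        push_neg at hcon
        obtain ⟨t₀, ht₀, hkt₀⟩ := hcon
        have hge : ∀ t, t₀ ≤ t → 2 * k t₀ ≤ 2 * k t := by
          intro t ht
          have := hkmono ht₀ (le_trans ht₀ ht) ht
          linarith
        have hgrow := grow_of_deriv_ge ht₀ hphi' hge
        set T : ℝ := t₀ + ((2*M)^2 + 1) / (2 * k t₀) with hT
        have hTge : t₀ ≤ T := by
          have h1 : (0:ℝ) ≤ ((2*M)^2 + 1) / (2 * k t₀) := by positivity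
          rw [hT]; linarith
        have h1 := hgrow T hTge
        have h2 : 2 * k t₀ * (T - t₀) = (2*M)^2 + 1 := by
          rw [hT]; field_simp; ring
        have h3 : (⟪u T, u T⟫ : ℝ) ≤ (2*M)^2 := by
          have e1 : (⟪u T, u T⟫ : ℝ) = ‖u T‖^2 := real_inner_self_eq_norm_sq _
          have e2 : ‖u T‖ ≤ 2*M := by
            have := norm_sub_le (v (T+h)) (v T)
            have hb1 := hM (T+h) (add_nonneg (le_trans ht₀ hTge) hh.le)
            have hb2 := hM T (le_trans ht₀ hTge)
            calc ‖u T‖ = ‖v (T+h) - v T‖ := rfl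
              _ ≤ ‖v (T+h)‖ + ‖v T‖ := norm_sub_le _ _
              _ ≤ 2*M := by linarith
          rw [e1]
          nlinarith [norm_nonneg (u T)]
        have h4 : (0:ℝ) ≤ ⟪u t₀, u t₀⟫ := real_inner_self_nonneg
        linarith
      exact antiIci hphi' (fun t ht => by linarith [hkle t ht])
    -- pass to the limit h → 0⁺
    have hslope : ∀ t ∈ Ici (0:ℝ), Tendsto (fun h => ‖v (t+h) - v t‖ / h)
        (nhdsWithin 0 (Ioi 0)) (nhds ‖v' t‖) := by
      intro t ht
      have h1 := hasDerivWithinAt_iff_tendsto_slope.1 (hv t ht)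
      have h2 : Tendsto (fun h : ℝ => t + h) (nhdsWithin 0 (Ioi 0))
          (nhdsWithin t (Ici 0 \ {t})) := by
        refine tendsto_nhdsWithin_of_tendsto_nhds_of_eventually_within _ ?_ ?_
        · have hc : Continuous (fun h : ℝ => t + h) := continuous_const.add continuous_id
          have h5 := hc.tendsto 0
          have h6 : Tendsto (fun h : ℝ => t + h) (nhds 0) (nhds t) := by simpa using h5
          exact h6.mono_left nhdsWithin_le_nhds
        · filter_upwards [self_mem_nhdsWithin] with h hh
          have hh0 : (0:ℝ) < h := mem_Ioi.1 hh
          refine ⟨add_nonneg ht hh0.le, ?_⟩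
          simp only [mem_singleton_iff]
          intro hcon
          have : h = 0 := by linarith [congrArg (fun z => z - t) hcon]
          exact absurd this (ne_of_gt hh0)
      have h3 := h1.comp h2
      have h4 : Tendsto (fun h : ℝ => ‖slope v t (t + h)‖) (nhdsWithin 0 (Ioi 0))
          (nhds ‖v' t‖) := (continuous_norm.tendsto _).comp h3
      refine Tendsto.congr' ?_ h4
      filter_upwards [self_mem_nhdsWithin] with h hh
      have hh0 : (0:ℝ) < h := mem_Ioi.1 hh
      rw [slope_def_module, norm_smul]
      have e : t + h - t = h := by ring
      rw [e, Real.norm_eq_abs, abs_inv, abs_of_pos hh0]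
      ring
    intro s hs t ht hst
    refine le_of_tendsto_of_tendsto (hslope t ht) (hslope s hs) ?_
    filter_upwards [self_mem_nhdsWithin] with h hh
    have hh0 : (0:ℝ) < h := mem_Ioi.1 hh
    have h1 : (⟪v (t+h) - v t, v (t+h) - v t⟫ : ℝ) ≤ ⟪v (s+h) - v s, v (s+h) - v s⟫ :=
      hphi h hh0 hs ht hst
    have e1 : (⟪v (t+h) - v t, v (t+h) - v t⟫ : ℝ) = ‖v (t+h) - v t‖^2 :=
      real_inner_self_eq_norm_sq _
    have e2 : (⟪v (s+h) - v s, v (s+h) - v s⟫ : ℝ) = ‖v (s+h) - v s‖^2 :=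
      real_inner_self_eq_norm_sq _
    rw [e1, e2] at h1
    have h2 : ‖v (t+h) - v t‖ ≤ ‖v (s+h) - v s‖ := by
      nlinarith [norm_nonneg (v (t+h) - v t), norm_nonneg (v (s+h) - v s)]
    exact (div_le_div_iff_of_pos_right hh0).2 h2
  -- step 2 : ‖v' t‖ → 0
  have hv'0 : Tendsto (fun t => ‖v' t‖) atTop (nhds 0) := by
    set f : ℝ → ℝ := fun t => ‖v' (max t 0)‖ with hf
    have hfanti : Antitone f := fun s t hst =>
      hv'anti (le_max_right s 0) (le_max_right t 0) (max_le_max hst le_rfl)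
    have hbdd : BddBelow (range f) := ⟨0, fun y ⟨t, ht⟩ => ht ▸ norm_nonneg _⟩
    have htend := tendsto_atTop_ciInf hfanti hbdd
    obtain ⟨c, hcdef⟩ : ∃ c : ℝ, c = ⨅ t, f t := ⟨_, rfl⟩
    rw [← hcdef] at htend
    have hc0 : 0 ≤ c := hcdef ▸ le_ciInf fun t => norm_nonneg _
    have hceq : c = 0 := by
      by_contra hcne
      have hcpos : 0 < c := lt_of_le_of_ne hc0 (Ne.symm hcne)
      have hint : Integrable (fun _ : ℝ => c^2) (volume.restrict (Ioi 0)) := by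
        refine Integrable.mono' hw_int aestronglyMeasurable_const ?_
        rw [ae_restrict_iff' measurableSet_Ioi]
        refine Eventually.of_forall fun t ht => ?_
        have h1 : c ≤ f t := hcdef ▸ ciInf_le hbdd t
        have h2 : f t = ‖v' t‖ := by rw [hf]; simp [max_eq_left (le_of_lt (mem_Ioi.1 ht))]
        rw [Real.norm_eq_abs, abs_of_nonneg (by positivity)]
        have h3 : c ≤ ‖v' t‖ := h2 ▸ h1
        have h4 : c^2 ≤ ‖v' t‖^2 := by nlinarith
        exact h4
      rw [integrable_const_iff] at hint
      rcases hint with h | h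
      · nlinarith
      · rw [isFiniteMeasure_iff, Measure.restrict_apply_univ, Real.volume_Ioi] at h
        exact absurd h (by simp)
    rw [hceq] at htend
    refine Tendsto.congr' ?_ htend
    filter_upwards [eventually_ge_atTop (0:ℝ)] with t ht
    rw [hf]; simp [max_eq_left ht]
  -- energy conservation
  have hE : ∀ t ∈ Ici (0:ℝ),
      V (v t) - (1/2) * ⟪v' t, v' t⟫ = V (v 0) - (1/2) * ⟪v' 0, v' 0⟫ := by
    set E : ℝ → ℝ := fun t => V (v t) - (1/2) * ⟪v' t, v' t⟫ with hEdef
    have hE' : ∀ t ∈ Ici (0:ℝ), HasDerivWithinAt E 0 (Ici 0) t := by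
      intro t ht
      have h1 : HasDerivWithinAt (fun u => V (v u)) ⟪gradient V (v t), v' t⟫ (Ici 0) t := by
        have := (hgrad (v t)).hasFDerivAt.comp_hasDerivWithinAt t (hv t ht)
        simpa [InnerProductSpace.toDual_apply_apply, Function.comp_def] using this
      have h2 : HasDerivWithinAt (fun u => (1/2 : ℝ) * ⟪v' u, v' u⟫)
          ((1/2) * (⟪v' t, gradient V (v t)⟫ + ⟪gradient V (v t), v' t⟫)) (Ici 0) t :=
        ((hv' t ht).inner ℝ (hv' t ht)).const_mul _
      have h3 := h1.sub h2
      have e : (⟪gradient V (v t), v' t⟫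
          - (1/2) * (⟪v' t, gradient V (v t)⟫ + ⟪gradient V (v t), v' t⟫) : ℝ) = 0 := by
        rw [real_inner_comm (v' t) (gradient V (v t))]; ring
      exact e ▸ h3
    have hEmono := monoIci hE' (fun t _ => le_rfl)
    have hEanti := antiIci hE' (fun t _ => le_rfl)
    intro t ht
    exact le_antisymm (hEanti self_mem_Ici ht ht) (hEmono self_mem_Ici ht ht)
  -- V (v t) → 0
  have hVv0 : Tendsto (fun t => V (v t)) atTop (nhds 0) := by
    set E0 : ℝ := V (v 0) - (1/2) * ⟪v' 0, v' 0⟫ with hE0def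
    have hlim : Tendsto (fun t => V (v t)) atTop (nhds (E0 + (1/2)*(0*0))) := by
      have h1 : Tendsto (fun t => E0 + (1/2) * (‖v' t‖ * ‖v' t‖)) atTop
          (nhds (E0 + (1/2) * (0*0))) :=
        tendsto_const_nhds.add ((hv'0.mul hv'0).const_mul _)
      refine Tendsto.congr' ?_ h1
      filter_upwards [eventually_ge_atTop (0:ℝ)] with t ht
      have h2 := hE t ht
      have h3 : (⟪v' t, v' t⟫:ℝ) = ‖v' t‖ * ‖v' t‖ := real_inner_self_eq_norm_mul_norm _
      rw [← h3]
      linarith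
    have hE0 : E0 + (1/2)*(0*0) = 0 := by
      have hge : 0 ≤ E0 + (1/2)*(0*0) :=
        ge_of_tendsto' hlim (fun t => hV0 (v t))
      by_contra hne
      have hpos : 0 < E0 + (1/2)*(0*0) := lt_of_le_of_ne hge (Ne.symm hne)
      set c := E0 + (1/2)*(0*0)
      have hev2 : ∀ᶠ t in atTop, c/2 ≤ V (v t) :=
        hlim.eventually (eventually_ge_nhds (half_lt_self hpos))
      obtain ⟨T, hT⟩ := eventually_atTop.1 hev2
      set T' : ℝ := max T 0 with hT'
      have hsub : Ioi T' ⊆ Ioi (0:ℝ) := fun y hy => lt_of_le_of_lt (le_max_right T 0) hy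
      have hint : Integrable (fun _ : ℝ => c/2) (volume.restrict (Ioi T')) := by
        refine Integrable.mono' (hVv_int.mono_set hsub) aestronglyMeasurable_const ?_
        rw [ae_restrict_iff' measurableSet_Ioi]
        refine Eventually.of_forall fun t ht => ?_
        rw [Real.norm_eq_abs, abs_of_nonneg (by positivity)]
        exact hT t (le_of_lt (lt_of_le_of_lt (le_max_left T 0) ht))
      rw [integrable_const_iff] at hint
      rcases hint with h | h
      · have : c/2 > 0 := by positivity
        rw [h] at this; exact absurd this (by norm_num)
      · rw [isFiniteMeasure_iff, Measure.restrict_apply_univ, Real.volume_Ioi] at h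
        exact absurd h (by simp)
    rw [hE0] at hlim
    exact hlim
  -- limits of ‖v t - xhat‖ exist for critical points
  have hnormlim : ∀ xhat : H, gradient ψ xhat = 0 →
      ∃ l : ℝ, Tendsto (fun t => ‖v t - xhat‖) atTop (nhds l) := by
    intro xhat hxhat
    set f : ℝ → ℝ := fun t => ‖v (max t 0) - xhat‖ with hf
    have hfanti : Antitone f := fun s t hst =>
      parti xhat hxhat (le_max_right s 0) (le_max_right t 0) (max_le_max hst le_rfl)
    have hbdd : BddBelow (range f) := ⟨0, fun y ⟨t, ht⟩ => ht ▸ norm_nonneg _⟩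
    refine ⟨⨅ t, f t, Tendsto.congr' ?_ (tendsto_atTop_ciInf hfanti hbdd)⟩
    filter_upwards [eventually_ge_atTop (0:ℝ)] with t ht
    rw [hf]; simp [max_eq_left ht]
  -- weak cluster points along sequences tending to ∞ are critical
  have hcritlim : ∀ (u : ℕ → ℝ), Tendsto u atTop atTop →
      ∀ (z' : H), (∀ y : H, Tendsto (fun n => ⟪v (u n), y⟫) atTop (nhds ⟪z', y⟫)) →
      gradient ψ z' = 0 := by
    intro u huT z' hz'
    have h1 : Tendsto (fun n => V (v (u n))) atTop (nhds 0) := hVv0.comp huT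
    have h5 : Tendsto (fun n => (⟪gradient V z', v (u n)⟫:ℝ)) atTop
        (nhds ⟪gradient V z', z'⟫) := by
      have h2 := hz' (gradient V z')
      have e1 : (fun n => (⟪gradient V z', v (u n)⟫:ℝ))
          = fun n => ⟪v (u n), gradient V z'⟫ := by
        funext n; exact real_inner_comm _ _
      rw [e1]
      have e2 : (⟪gradient V z', z'⟫:ℝ) = ⟪z', gradient V z'⟫ := real_inner_comm _ _
      rw [e2]
      exact h2
    have h3 : ∀ n, V z' ≤ V (v (u n)) - ⟪gradient V z', v (u n)⟫ + ⟪gradient V z', z'⟫ := by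
      intro n
      have h4 := hkey z' (v (u n))
      have e : (⟪gradient V z', v (u n) - z'⟫:ℝ)
          = ⟪gradient V z', v (u n)⟫ - ⟪gradient V z', z'⟫ := inner_sub_right _ _ _
      linarith
    have h6 : Tendsto (fun n => V (v (u n)) - ⟪gradient V z', v (u n)⟫ + ⟪gradient V z', z'⟫)
        atTop (nhds (0 - ⟪gradient V z', z'⟫ + ⟪gradient V z', z'⟫)) :=
      (h1.sub h5).add tendsto_const_nhds
    have h7 : V z' ≤ 0 - ⟪gradient V z', z'⟫ + ⟪gradient V z', z'⟫ :=
      ge_of_tendsto h6 (Eventually.of_forall h3)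
    have h8 : V z' ≤ 0 := by linarith
    exact hVzero _ (le_antisymm h8 (hV0 _))
  -- extract the weak limit along the natural numbers
  have hMnat : ∀ n : ℕ, ‖v (n:ℝ)‖ ≤ M := fun n => hM _ (Nat.cast_nonneg n)
  obtain ⟨φ, z, hφmono, hφweak⟩ := weak_compact hMnat
  have hφT : Tendsto (fun n => ((φ n : ℕ) : ℝ)) atTop atTop :=
    tendsto_natCast_atTop_atTop.comp hφmono.tendsto_atTop
  have hzcrit : gradient ψ z = 0 := hcritlim _ hφT z hφweak
  refine ⟨parti, ⟨M, hM⟩, z, hzcrit, ?_⟩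
  intro y
  refine tendsto_of_subseq_tendsto fun ns hns => ?_
  set u : ℕ → ℝ := fun n => max (ns n) 0 with hu
  have hu0 : ∀ n, 0 ≤ u n := fun n => le_max_right _ _
  have huT : Tendsto u atTop atTop := tendsto_atTop_mono (fun n => le_max_left _ _) hns
  have hMn : ∀ n, ‖v (u n)‖ ≤ M := fun n => hM _ (hu0 n)
  obtain ⟨ms, z₂, hmsmono, hmsweak⟩ := weak_compact hMn
  have humsT : Tendsto (fun k => u (ms k)) atTop atTop := huT.comp hmsmono.tendsto_atTop
  have hz₂crit : gradient ψ z₂ = 0 := hcritlim _ humsT z₂ hmsweak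
  -- uniqueness of the weak limit
  have hz2eq : z₂ = z := by
    obtain ⟨l₁, hl₁⟩ := hnormlim z hzcrit
    obtain ⟨l₂, hl₂⟩ := hnormlim z₂ hz₂crit
    set c : ℝ := ((‖z‖^2 - ‖z₂‖^2) - (l₁^2 - l₂^2)) / 2 with hc
    have hg : Tendsto (fun t => (⟪v t, z - z₂⟫:ℝ)) atTop (nhds c) := by
      have h1 : Tendsto (fun t => ‖v t - z‖^2 - ‖v t - z₂‖^2) atTop
          (nhds (l₁^2 - l₂^2)) := (hl₁.pow 2).sub (hl₂.pow 2)
      have h3 : Tendsto (fun t => ((‖z‖^2 - ‖z₂‖^2) - (‖v t - z‖^2 - ‖v t - z₂‖^2))/2)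
          atTop (nhds (((‖z‖^2 - ‖z₂‖^2) - (l₁^2 - l₂^2))/2)) :=
        (tendsto_const_nhds.sub h1).div_const 2
      refine Tendsto.congr ?_ h3
      intro t
      have e1 : ‖v t - z‖^2 = ‖v t‖^2 - 2*⟪v t, z⟫ + ‖z‖^2 := norm_sub_sq_real _ _
      have e2 : ‖v t - z₂‖^2 = ‖v t‖^2 - 2*⟪v t, z₂⟫ + ‖z₂‖^2 := norm_sub_sq_real _ _
      have e3 : (⟪v t, z - z₂⟫:ℝ) = ⟪v t, z⟫ - ⟪v t, z₂⟫ := inner_sub_right _ _ _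
      rw [e1, e2, e3]
      ring
    have l1' := hφweak (z - z₂)
    have e1 : c = ⟪z, z - z₂⟫ := tendsto_nhds_unique (hg.comp hφT) l1'
    have l2' := hmsweak (z - z₂)
    have e2 : c = ⟪z₂, z - z₂⟫ := tendsto_nhds_unique (hg.comp humsT) l2'
    have e3 : (⟪z - z₂, z - z₂⟫:ℝ) = 0 := by
      rw [inner_sub_left]; linarith
    have e4 : z - z₂ = 0 := inner_self_eq_zero.1 e3
    have : z = z₂ := by
      have := sub_eq_zero.1 e4; exact this
    exact this.symm
  refine ⟨ms, ?_⟩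
  have h7 := hmsweak y
  rw [hz2eq] at h7
  refine Tendsto.congr' ?_ h7
  have h8 : ∀ᶠ n in atTop, 0 ≤ ns (ms n) :=
    (hns.comp hmsmono.tendsto_atTop).eventually_ge_atTop 0
  filter_upwards [h8] with n hn
  rw [hu]
  simp [max_eq_left hn]
end

section
/- Assume ψ is bounded from below and V(x) = ½‖∇ψ(x)‖² is convex. Then ψ is convex. -/
open Filter MeasureTheory Set Metric intervalIntegral
open scoped NNReal Topology RealInnerProductSpace

set_option linter.unusedSectionVars false
set_option linter.unusedVariables false
set_option linter.deprecated false

section Stmt18Aux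

variable {H : Type*} [NormedAddCommGroup H] [InnerProductSpace ℝ H] [CompleteSpace H]
variable {ψ : H → ℝ} {x₀ : H}


lemma contDiff_gradient (hψ : ContDiff ℝ 2 ψ) : ContDiff ℝ 1 (gradient ψ) := by
  have h1 : ContDiff ℝ 1 (fderiv ℝ ψ) := hψ.fderiv_right (by norm_num)
  have h2 : ContDiff ℝ 1 (fun x => (InnerProductSpace.toDual ℝ H).symm (fderiv ℝ ψ x)) :=
    ((InnerProductSpace.toDual ℝ H).symm.toContinuousLinearEquiv.toContinuousLinearMap.contDiff).comp h1
  exact h2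

lemma hasFDerivAt_of_grad (hψ : ContDiff ℝ 2 ψ) (x : H) :
    HasFDerivAt ψ ((InnerProductSpace.toDual ℝ H) (gradient ψ x)) x := by
  have h := ((hψ.differentiable (by norm_num)) x).hasGradientAt
  rwa [hasGradientAt_iff_hasFDerivAt] at h

lemma fderiv_psi_apply (hψ : ContDiff ℝ 2 ψ) (x u : H) :
    fderiv ℝ ψ x u = ⟪gradient ψ x, u⟫ := by
  rw [(hasFDerivAt_of_grad hψ x).fderiv]; simp [InnerProductSpace.toDual_apply_apply]

lemma Dg_symm (hψ : ContDiff ℝ 2 ψ) (x u w : H) :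
    ⟪fderiv ℝ (gradient ψ) x u, w⟫ = ⟪fderiv ℝ (gradient ψ) x w, u⟫ := by
  set g := gradient ψ with hg
  have hgd : Differentiable ℝ g := (contDiff_gradient hψ).differentiable one_ne_zero
  set e := (InnerProductSpace.toDual ℝ H) with he
  -- fderiv ℝ ψ = fun z => e (g z)
  have hfd : ∀ z : H, fderiv ℝ ψ z = e (g z) := fun z => (hasFDerivAt_of_grad hψ z).fderiv
  have hd2 : HasFDerivAt (fun z => e (g z))
      ((e.toContinuousLinearEquiv.toContinuousLinearMap).comp (fderiv ℝ g x)) x :=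
    (e.toContinuousLinearEquiv.toContinuousLinearMap.hasFDerivAt).comp x (hgd x).hasFDerivAt
  have hd2' : HasFDerivAt (fderiv ℝ ψ)
      ((e.toContinuousLinearEquiv.toContinuousLinearMap).comp (fderiv ℝ g x)) x := by
    have : (fun z => e (g z)) = fderiv ℝ ψ := by funext z; rw [hfd z]
    rwa [this] at hd2
  have hsymm := second_derivative_symmetric (f := ψ) (f' := fderiv ℝ ψ)
    (fun y => (hψ.differentiable (by norm_num) y).hasFDerivAt.congr_fderiv rfl) hd2' u w
  have h1 : ∀ a b : H,
      ((e.toContinuousLinearEquiv.toContinuousLinearMap).comp (fderiv ℝ g x)) a b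
        = ⟪fderiv ℝ g x a, b⟫ := by
    intro a b
    simp [ContinuousLinearMap.comp_apply, he, InnerProductSpace.toDual_apply_apply]
  rw [← h1 u w, ← h1 w u, hsymm]

lemma hasDerivAt_V_line (hψ : ContDiff ℝ 2 ψ) (x y : H) (t : ℝ) :
    HasDerivAt (fun s : ℝ => (1/2 : ℝ) * ‖gradient ψ (y + s • (x - y))‖ ^ 2)
      ⟪fderiv ℝ (gradient ψ) (y + t • (x - y)) (gradient ψ (y + t • (x - y))), x - y⟫ t := by
  set l : ℝ → H := fun s => y + s • (x - y) with hl
  have hld : HasDerivAt l (x - y) t := by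
    have := (hasDerivAt_const t y).add ((hasDerivAt_id t).smul_const (x - y))
    simp only [zero_add, one_smul] at this; exact this
  have hgd := (contDiff_gradient hψ).differentiable one_ne_zero
  have hG : HasDerivAt (fun s => gradient ψ (l s)) (fderiv ℝ (gradient ψ) (l t) (x - y)) t :=
    (hgd (l t)).hasFDerivAt.comp_hasDerivAt t hld
  have h2 := (hG.inner ℝ hG).const_mul (1/2 : ℝ)
  have hval : (1/2 : ℝ) * (⟪gradient ψ (l t), fderiv ℝ (gradient ψ) (l t) (x - y)⟫
      + ⟪fderiv ℝ (gradient ψ) (l t) (x - y), gradient ψ (l t)⟫)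
      = ⟪fderiv ℝ (gradient ψ) (l t) (gradient ψ (l t)), x - y⟫ := by
    have e1 : ⟪fderiv ℝ (gradient ψ) (l t) (x - y), gradient ψ (l t)⟫
        = ⟪fderiv ℝ (gradient ψ) (l t) (gradient ψ (l t)), x - y⟫ :=
      Dg_symm hψ (l t) (x - y) (gradient ψ (l t))
    have e2 : ⟪gradient ψ (l t), fderiv ℝ (gradient ψ) (l t) (x - y)⟫
        = ⟪fderiv ℝ (gradient ψ) (l t) (gradient ψ (l t)), x - y⟫ := by
      rw [real_inner_comm]; exact e1
    rw [e1, e2]; ring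
  rw [hval] at h2
  have hfun : (fun s => (1/2 : ℝ) * ⟪gradient ψ (l s), gradient ψ (l s)⟫)
      = fun s : ℝ => (1/2 : ℝ) * ‖gradient ψ (l s)‖ ^ 2 := by
    funext s; rw [real_inner_self_eq_norm_sq]
  rw [hfun] at h2
  exact h2

lemma gradV_mono (hψ : ContDiff ℝ 2 ψ)
    (hVconv : ConvexOn ℝ univ (fun x => (1/2 : ℝ) * ‖gradient ψ x‖ ^ 2)) (x y : H) :
    0 ≤ ⟪fderiv ℝ (gradient ψ) x (gradient ψ x)
        - fderiv ℝ (gradient ψ) y (gradient ψ y), x - y⟫ := by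
  set l : ℝ → H := fun s => y + s • (x - y) with hl
  set q : ℝ → ℝ := fun s => (1/2 : ℝ) * ‖gradient ψ (l s)‖ ^ 2 with hq
  have hqconv : ConvexOn ℝ univ q := by
    refine ⟨convex_univ, ?_⟩
    intro s _ t _ a b ha hb hab
    have hcomb : l (a * s + b * t) = a • l s + b • l t := by
      simp only [hl]
      match_scalars <;> linarith
    have := hVconv.2 (mem_univ (l s)) (mem_univ (l t)) ha hb hab
    simpa [hq, hcomb, smul_eq_mul] using this
  have h0 := hasDerivAt_V_line hψ x y 0
  have h1 := hasDerivAt_V_line hψ x y 1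
  have hle0 := hqconv.le_slope_of_hasDerivAt (mem_univ (0:ℝ)) (mem_univ 1) one_pos h0
  have hle1 := hqconv.slope_le_of_hasDerivAt (mem_univ (0:ℝ)) (mem_univ 1) one_pos h1
  have hkey := hle0.trans hle1
  have hyx : y + (x - y) = x := by abel
  simp only [zero_smul, add_zero, one_smul, hyx] at hkey
  rw [inner_sub_left]
  linarith

lemma exists_lipschitz_nbhd_compact {f : H → H} (hf : ContDiff ℝ 1 f)
    {C : Set H} (hC : IsCompact C) :
    ∃ (N : Set H) (K : ℝ≥0), IsOpen N ∧ C ⊆ N ∧ LipschitzOnWith K f N := by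
  -- local Lipschitz data
  have hloc : ∀ z : H, ∃ (K : ℝ≥0) (ε : ℝ), 0 < ε ∧ LipschitzOnWith K f (ball z ε) := by
    intro z
    obtain ⟨K, s, hs, hlip⟩ := hf.contDiffAt.exists_lipschitzOnWith (x := z)
    obtain ⟨ε, hε, hball⟩ := Metric.mem_nhds_iff.mp hs
    exact ⟨K, ε, hε, hlip.mono hball⟩
  choose Kz εz hεz hlipz using hloc
  have hUnhds : ∀ z ∈ C, ball z (εz z / 2) ∈ 𝓝 z := fun z _ =>
    ball_mem_nhds z (by linarith [hεz z])
  obtain ⟨F, hFC, hcover⟩ := hC.elim_nhds_subcover (fun z => ball z (εz z / 2)) hUnhds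
  rcases F.eq_empty_or_nonempty with rfl | hne
  · refine ⟨∅, 1, isOpen_empty, by simpa using hcover, ?_⟩
    simp [lipschitzOnWith_empty]
  set N : Set H := ⋃ z ∈ F, ball z (εz z / 2) with hN
  have hNopen : IsOpen N := isOpen_biUnion fun z _ => isOpen_ball
  set δ : ℝ := F.inf' hne (fun z => εz z / 2) with hδ
  have hδpos : 0 < δ := by
    rw [hδ, Finset.lt_inf'_iff]
    intro z _; linarith [hεz z]
  set K₀ : ℝ≥0 := F.sup' hne Kz with hK₀
  set M : ℝ := F.sup' hne (fun z => ‖f z‖ + (Kz z : ℝ) * εz z) with hM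
  have hmem : ∀ y ∈ N, ∃ z ∈ F, y ∈ ball z (εz z / 2) := by
    intro y hy; rw [hN] at hy; simpa using hy
  have hbound : ∀ y ∈ N, ‖f y‖ ≤ M := by
    intro y hy
    obtain ⟨z, hzF, hyz⟩ := hmem y hy
    have hz : z ∈ ball z (εz z) := mem_ball_self (hεz z)
    have hy' : y ∈ ball z (εz z) := by
      have := mem_ball.mp hyz; exact mem_ball.mpr (by linarith [hεz z])
    have hd := (hlipz z).dist_le_mul y hy' z hz
    have h1 : ‖f y‖ - ‖f z‖ ≤ dist (f y) (f z) := by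
      rw [dist_eq_norm]; exact norm_sub_norm_le _ _
    have h2 : dist (f y) (f z) ≤ (Kz z : ℝ) * εz z := by
      calc dist (f y) (f z) ≤ (Kz z : ℝ) * dist y z := hd
        _ ≤ (Kz z : ℝ) * εz z := by
            apply mul_le_mul_of_nonneg_left (le_of_lt (mem_ball.mp hy')) (Kz z).coe_nonneg
    have h3 : ‖f z‖ + (Kz z : ℝ) * εz z ≤ M := Finset.le_sup' (fun z => ‖f z‖ + (Kz z : ℝ) * εz z) hzF
    linarith
  have hMnonneg : 0 ≤ M := by
    obtain ⟨z, hzF⟩ := hne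
    have : ‖f z‖ + (Kz z : ℝ) * εz z ≤ M := Finset.le_sup' (fun z => ‖f z‖ + (Kz z : ℝ) * εz z) hzF
    have h1 : 0 ≤ ‖f z‖ := norm_nonneg _
    have h2 : 0 ≤ (Kz z : ℝ) * εz z := mul_nonneg (Kz z).coe_nonneg (le_of_lt (hεz z))
    linarith
  refine ⟨N, max K₀ (Real.toNNReal (2 * M / δ)), hNopen, hcover, ?_⟩
  rw [lipschitzOnWith_iff_dist_le_mul]
  intro u hu w hw
  rcases lt_or_ge (dist u w) δ with hcase | hcase
  · obtain ⟨z, hzF, huz⟩ := hmem u hu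
    have hδz : δ ≤ εz z / 2 := Finset.inf'_le _ hzF
    have hu' : u ∈ ball z (εz z) := by
      have := mem_ball.mp huz; exact mem_ball.mpr (by linarith [hεz z])
    have hw' : w ∈ ball z (εz z) := by
      have h1 := mem_ball.mp huz
      have : dist w z ≤ dist w u + dist u z := dist_triangle _ _ _
      rw [dist_comm w u] at this
      exact mem_ball.mpr (by linarith)
    have hd := (hlipz z).dist_le_mul u hu' w hw'
    have hKle : (Kz z : ℝ) ≤ (max K₀ (Real.toNNReal (2 * M / δ)) : ℝ≥0) := by
      have h1 : Kz z ≤ K₀ := Finset.le_sup' Kz hzF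
      exact_mod_cast h1.trans (le_max_left _ _)
    calc dist (f u) (f w) ≤ (Kz z : ℝ) * dist u w := hd
      _ ≤ _ := mul_le_mul_of_nonneg_right hKle dist_nonneg
  · have h2M : dist (f u) (f w) ≤ 2 * M := by
      have := dist_le_norm_add_norm (f u) (f w)
      have h1 := hbound u hu
      have h2 := hbound w hw
      linarith
    have hdivle : 2 * M / δ ≤ ((max K₀ (Real.toNNReal (2 * M / δ)) : ℝ≥0) : ℝ) := by
      have h1 : 2 * M / δ ≤ (Real.toNNReal (2 * M / δ) : ℝ) :=
        Real.le_coe_toNNReal _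
      have h2 : (Real.toNNReal (2 * M / δ) : ℝ) ≤ ((max K₀ (Real.toNNReal (2 * M / δ)) : ℝ≥0) : ℝ) := by
        exact_mod_cast le_max_right K₀ (Real.toNNReal (2 * M / δ))
      linarith
    calc dist (f u) (f w) ≤ 2 * M := h2M
      _ = (2 * M / δ) * δ := by field_simp
      _ ≤ (2 * M / δ) * dist u w := by
          apply mul_le_mul_of_nonneg_left hcase (div_nonneg (by linarith) (le_of_lt hδpos))
      _ ≤ _ := mul_le_mul_of_nonneg_right hdivle dist_nonneg

/-- gradient flow solution of `ψ` on `[0, b]` starting at `x₀`. -/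
def Sol (ψ : H → ℝ) (x₀ : H) (b : ℝ) (X : ℝ → H) : Prop :=
  X 0 = x₀ ∧ ∀ t ∈ Icc 0 b, HasDerivWithinAt X (-(gradient ψ (X t))) (Icc 0 b) t

namespace Sol

lemma mono {b b' : ℝ} {X : ℝ → H} (h : Sol ψ x₀ b X) (hb0 : 0 ≤ b') (hb : b' ≤ b) :
    Sol ψ x₀ b' X := by
  refine ⟨h.1, fun t ht => ?_⟩
  exact (h.2 t ⟨ht.1, ht.2.trans hb⟩).mono (Icc_subset_Icc le_rfl hb)

lemma continuousOn {b : ℝ} {X : ℝ → H} (h : Sol ψ x₀ b X) : ContinuousOn X (Icc 0 b) :=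
  fun t ht => (h.2 t ht).continuousWithinAt

lemma hasDerivAt_interior {b : ℝ} {X : ℝ → H} (h : Sol ψ x₀ b X) {t : ℝ}
    (ht : t ∈ Ioo 0 b) : HasDerivAt X (-(gradient ψ (X t))) t :=
  (h.2 t (Ioo_subset_Icc_self ht)).hasDerivAt (Icc_mem_nhds ht.1 ht.2)

lemma unique (hψ : ContDiff ℝ 2 ψ) {b : ℝ} {X X' : ℝ → H} (hb : 0 ≤ b)
    (h : Sol ψ x₀ b X) (h' : Sol ψ x₀ b X') : EqOn X X' (Icc 0 b) := by
  have hC : IsCompact (X '' Icc 0 b ∪ X' '' Icc 0 b) :=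
    (isCompact_Icc.image_of_continuousOn h.continuousOn).union
      (isCompact_Icc.image_of_continuousOn h'.continuousOn)
  obtain ⟨N, K, hNopen, hCN, hlip⟩ :=
    exists_lipschitz_nbhd_compact ((contDiff_gradient hψ).neg) hC
  have hIci : ∀ t ∈ Ico (0:ℝ) b, Icc (0:ℝ) b ∈ 𝓝[Ici t] t := by
    intro t ht
    rw [mem_nhdsWithin]
    exact ⟨Iio b, isOpen_Iio, ht.2, fun z hz => ⟨ht.1.trans hz.2, le_of_lt hz.1⟩⟩
  exact ODE_solution_unique_of_mem_Icc_right (v := fun _ z => -(gradient ψ z))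
    (s := fun _ => N) (fun _ _ => hlip)
    h.continuousOn
    (fun t ht => ((h.2 t (Ico_subset_Icc_self ht)).mono_of_mem_nhdsWithin (hIci t ht)))
    (fun t ht => hCN (mem_union_left _ (mem_image_of_mem X (Ico_subset_Icc_self ht))))
    h'.continuousOn
    (fun t ht => ((h'.2 t (Ico_subset_Icc_self ht)).mono_of_mem_nhdsWithin (hIci t ht)))
    (fun t ht => hCN (mem_union_right _ (mem_image_of_mem X' (Ico_subset_Icc_self ht))))
    (h.1.trans h'.1.symm)

lemma extend (hψ : ContDiff ℝ 2 ψ) {b : ℝ} {X : ℝ → H} (hb : 0 ≤ b) (h : Sol ψ x₀ b X) :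
    ∃ ε > 0, ∃ Z, Sol ψ x₀ (b + ε) Z := by
  obtain ⟨Y, hY0, ε, hε, hYd⟩ :=
    ContDiffAt.exists_forall_mem_closedBall_exists_eq_forall_mem_Ioo_hasDerivAt₀ (x₀ := X b)
      (f := fun z => -(gradient ψ z)) ((contDiff_gradient hψ).neg.contDiffAt) b
  rcases eq_or_lt_of_le hb with rfl | hb0
  · refine ⟨ε/2, by linarith, Y, by rw [← h.1, ← hY0], fun t ht => ?_⟩
    have htI : t ∈ Ioo (0 - ε) (0 + ε) := ⟨by linarith [ht.1], by linarith [ht.2]⟩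
    exact (hYd t htI).hasDerivWithinAt
  · -- b > 0
    set a := max 0 (b - ε/2) with ha
    have ha0 : 0 ≤ a := le_max_left _ _
    have hab : a < b := max_lt hb0 (by linarith)
    have haε : b - ε < a := lt_of_lt_of_le (by linarith) (le_max_right _ _)
    have hYsub : Icc a b ⊆ Ioo (b - ε) (b + ε) := fun z hz =>
      ⟨lt_of_lt_of_le haε hz.1, lt_of_le_of_lt hz.2 (by linarith)⟩
    have hYcont : ContinuousOn Y (Icc a b) := fun t ht =>
      ((hYd t (hYsub ht)).continuousAt).continuousWithinAt
    have hXcont : ContinuousOn X (Icc a b) :=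
      h.continuousOn.mono (Icc_subset_Icc ha0 le_rfl)
    have hC : IsCompact (X '' Icc a b ∪ Y '' Icc a b) :=
      (isCompact_Icc.image_of_continuousOn hXcont).union
        (isCompact_Icc.image_of_continuousOn hYcont)
    obtain ⟨N, K, hNopen, hCN, hlip⟩ :=
      exists_lipschitz_nbhd_compact ((contDiff_gradient hψ).neg) hC
    have heq : EqOn X Y (Icc a b) := by
      refine ODE_solution_unique_of_mem_Icc_left (v := fun _ z => -(gradient ψ z))
        (s := fun _ => N) (fun _ _ => hlip) hXcont ?_ ?_ hYcont ?_ ?_ (hY0.symm)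
      · intro t ht
        have htmem : t ∈ Icc (0:ℝ) b := ⟨ha0.trans (le_of_lt ht.1), ht.2⟩
        refine (h.2 t htmem).mono_of_mem_nhdsWithin ?_
        rw [mem_nhdsWithin]
        refine ⟨Ioi 0, isOpen_Ioi, lt_of_le_of_lt ha0 ht.1, fun z hz => ⟨le_of_lt hz.1, hz.2.trans ht.2⟩⟩
      · intro t ht
        exact hCN (mem_union_left _ (mem_image_of_mem X (Ioc_subset_Icc_self ht)))
      · intro t ht
        exact ((hYd t (hYsub (Ioc_subset_Icc_self ht))).hasDerivWithinAt)
      · intro t ht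
        exact hCN (mem_union_right _ (mem_image_of_mem Y (Ioc_subset_Icc_self ht)))
    refine ⟨ε/2, by linarith, fun t => if t ≤ b then X t else Y t, ?_, ?_⟩
    · simp only [if_pos hb]; exact h.1
    · intro t ht
      set Z : ℝ → H := fun t => if t ≤ b then X t else Y t with hZ
      rcases lt_trichotomy t b with htb | heqt | htb
      · -- t < b
        have hZt : Z t = X t := if_pos (le_of_lt htb)
        have hmem : Icc (0:ℝ) b ∈ 𝓝[Icc 0 (b + ε/2)] t := by
          rw [mem_nhdsWithin]
          exact ⟨Iio b, isOpen_Iio, htb, fun z hz => ⟨hz.2.1, le_of_lt hz.1⟩⟩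
        have hD := (h.2 t ⟨ht.1, le_of_lt htb⟩).mono_of_mem_nhdsWithin hmem
        rw [hZt]
        refine hD.congr_of_eventuallyEq ?_ hZt
        filter_upwards [hmem] with z hz
        simp only [hZ, if_pos hz.2]
      · -- t = b
        subst heqt
        have hZb : Z t = X t := if_pos le_rfl
        have hXY : X t = Y t := hY0.symm
        have hYb : HasDerivAt Y (-(gradient ψ (Y t))) t :=
          hYd t ⟨by linarith, by linarith⟩
        have hmem : Ioi a ∈ 𝓝[Icc 0 (t + ε/2)] t :=
          mem_nhdsWithin_of_mem_nhds (Ioi_mem_nhds hab)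
        have hZY : ∀ z ∈ Ioi a, Z z = Y z := by
          intro z hz
          by_cases hzb : z ≤ t
          · simp only [hZ, if_pos hzb]; exact heq ⟨le_of_lt hz, hzb⟩
          · simp only [hZ, if_neg hzb]
        rw [hZb, hXY]
        refine (hYb.hasDerivWithinAt).congr_of_eventuallyEq ?_ ?_
        · filter_upwards [hmem] with z hz; exact hZY z hz
        · rw [hZb, hXY]
      · -- b < t
        have hntb : ¬ t ≤ b := not_le.mpr htb
        have hZt : Z t = Y t := if_neg hntb
        have htI : t ∈ Ioo (b - ε) (b + ε) := ⟨by linarith, by linarith [ht.2]⟩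
        have hmem : Ioi b ∈ 𝓝[Icc 0 (b + ε/2)] t :=
          mem_nhdsWithin_of_mem_nhds (Ioi_mem_nhds htb)
        rw [hZt]
        refine ((hYd t htI).hasDerivWithinAt).congr_of_eventuallyEq ?_ hZt
        filter_upwards [hmem] with z hz
        simp only [hZ, if_neg (not_le.mpr (show b < z from hz))]


/-- energy identity -/
lemma psi_integral (hψ : ContDiff ℝ 2 ψ) {b : ℝ} {X : ℝ → H} (h : Sol ψ x₀ b X)
    {s t : ℝ} (hs : 0 ≤ s) (hst : s ≤ t) (htb : t ≤ b) :
    ψ (X t) + ∫ r in s..t, ‖gradient ψ (X r)‖ ^ 2 = ψ (X s) := by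
  have hXc : ContinuousOn X (Icc s t) :=
    h.continuousOn.mono (Icc_subset_Icc hs htb)
  have hgc : ContinuousOn (fun r => ‖gradient ψ (X r)‖ ^ 2) (Icc s t) :=
    (((contDiff_gradient hψ).continuous.comp_continuousOn hXc).norm).pow 2
  have hint : IntervalIntegrable (fun r => -‖gradient ψ (X r)‖ ^ 2) volume s t :=
    (hgc.neg.mono (by rw [uIcc_of_le hst])).intervalIntegrable
  have hderiv : ∀ r ∈ Ioo s t,
      HasDerivWithinAt (fun r => ψ (X r)) (-‖gradient ψ (X r)‖ ^ 2) (Ioi r) r := by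
    intro r hr
    have hXd : HasDerivAt X (-(gradient ψ (X r))) r :=
      h.hasDerivAt_interior ⟨lt_of_le_of_lt hs hr.1, lt_of_lt_of_le hr.2 htb⟩
    have hc := (hasFDerivAt_of_grad hψ (X r)).comp_hasDerivAt r hXd
    have hval : (InnerProductSpace.toDual ℝ H) (gradient ψ (X r)) (-(gradient ψ (X r)))
        = -‖gradient ψ (X r)‖ ^ 2 := by
      rw [InnerProductSpace.toDual_apply_apply, inner_neg_right, real_inner_self_eq_norm_sq]
    rw [hval] at hc
    exact hc.hasDerivWithinAt
  have hcont : ContinuousOn (fun r => ψ (X r)) (Icc s t) :=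
    hψ.continuous.comp_continuousOn hXc
  have := integral_eq_sub_of_hasDeriv_right_of_le hst hcont hderiv hint
  rw [intervalIntegral.integral_neg] at this
  linarith [this]

/-- FTC for the curve itself -/
lemma ftc (hψ : ContDiff ℝ 2 ψ) {b : ℝ} {X : ℝ → H} (h : Sol ψ x₀ b X)
    {s t : ℝ} (hs : 0 ≤ s) (hst : s ≤ t) (htb : t ≤ b) :
    X t - X s = ∫ r in s..t, -(gradient ψ (X r)) := by
  have hXc : ContinuousOn X (Icc s t) :=
    h.continuousOn.mono (Icc_subset_Icc hs htb)
  have hgc : ContinuousOn (fun r => -(gradient ψ (X r))) (Icc s t) :=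
    ((contDiff_gradient hψ).continuous.comp_continuousOn hXc).neg
  have hint : IntervalIntegrable (fun r => -(gradient ψ (X r))) volume s t :=
    (hgc.mono (by rw [uIcc_of_le hst])).intervalIntegrable
  have hderiv : ∀ r ∈ Ioo s t,
      HasDerivWithinAt X (-(gradient ψ (X r))) (Ioi r) r := fun r hr =>
    (h.hasDerivAt_interior ⟨lt_of_le_of_lt hs hr.1, lt_of_lt_of_le hr.2 htb⟩).hasDerivWithinAt
  have := integral_eq_sub_of_hasDeriv_right_of_le hst hXc hderiv hint
  rw [this]

lemma psi_antitone (hψ : ContDiff ℝ 2 ψ) {b : ℝ} {X : ℝ → H} (h : Sol ψ x₀ b X)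
    {s t : ℝ} (hs : 0 ≤ s) (hst : s ≤ t) (htb : t ≤ b) : ψ (X t) ≤ ψ (X s) := by
  have h1 := h.psi_integral hψ hs hst htb
  have h2 : (0:ℝ) ≤ ∫ r in s..t, ‖gradient ψ (X r)‖ ^ 2 :=
    intervalIntegral.integral_nonneg hst (fun r _ => by positivity)
  linarith

lemma norm_sub_le (hψ : ContDiff ℝ 2 ψ) {b : ℝ} {X : ℝ → H} (h : Sol ψ x₀ b X)
    {s t η : ℝ} (hs : 0 ≤ s) (hst : s ≤ t) (htb : t ≤ b) (hη : 0 < η) :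
    ‖X t - X s‖ ≤ (η * (t - s) + (ψ (X s) - ψ (X t)) / η) / 2 := by
  have hXc : ContinuousOn X (Icc s t) :=
    h.continuousOn.mono (Icc_subset_Icc hs htb)
  have hgc : ContinuousOn (fun r => ‖gradient ψ (X r)‖) (Icc s t) :=
    ((contDiff_gradient hψ).continuous.comp_continuousOn hXc).norm
  have hgc2 : ContinuousOn (fun r => ‖gradient ψ (X r)‖ ^ 2) (Icc s t) := hgc.pow 2
  have hint1 : IntervalIntegrable (fun r => ‖gradient ψ (X r)‖) volume s t :=
    (hgc.mono (by rw [uIcc_of_le hst])).intervalIntegrable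
  have hint2 : IntervalIntegrable (fun r => η / 2 + ‖gradient ψ (X r)‖ ^ 2 / (2 * η)) volume s t := by
    apply IntervalIntegrable.add intervalIntegrable_const
    exact ((hgc2.div_const _).mono (by rw [uIcc_of_le hst])).intervalIntegrable
  have h1 : ‖X t - X s‖ ≤ ∫ r in s..t, ‖gradient ψ (X r)‖ := by
    rw [h.ftc hψ hs hst htb]
    calc ‖∫ r in s..t, -(gradient ψ (X r))‖ ≤ ∫ r in s..t, ‖-(gradient ψ (X r))‖ :=
          intervalIntegral.norm_integral_le_integral_norm hst
      _ = ∫ r in s..t, ‖gradient ψ (X r)‖ := by simp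
  have h2 : (∫ r in s..t, ‖gradient ψ (X r)‖)
      ≤ ∫ r in s..t, (η / 2 + ‖gradient ψ (X r)‖ ^ 2 / (2 * η)) := by
    apply intervalIntegral.integral_mono_on hst hint1 hint2
    intro r _
    have h3 : 0 ≤ (‖gradient ψ (X r)‖ - η)^2 := sq_nonneg _
    have h4 : 0 < 2 * η := by linarith
    rw [div_add_div _ _ (by linarith : (2:ℝ) ≠ 0) (ne_of_gt h4)]
    rw [le_div_iff₀ (by positivity)]
    nlinarith
  have h3 : (∫ r in s..t, (η / 2 + ‖gradient ψ (X r)‖ ^ 2 / (2 * η)))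
      = η / 2 * (t - s) + (∫ r in s..t, ‖gradient ψ (X r)‖ ^ 2) / (2 * η) := by
    rw [intervalIntegral.integral_add intervalIntegrable_const
      (((hgc2.div_const _).mono (by rw [uIcc_of_le hst])).intervalIntegrable)]
    rw [intervalIntegral.integral_const, intervalIntegral.integral_div]
    simp [smul_eq_mul, mul_comm]
  have h4 := h.psi_integral hψ hs hst htb
  have h5 : (∫ r in s..t, ‖gradient ψ (X r)‖ ^ 2) = ψ (X s) - ψ (X t) := by linarith
  rw [h5] at h3
  calc ‖X t - X s‖ ≤ _ := h1
    _ ≤ _ := h2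
    _ = η / 2 * (t - s) + (ψ (X s) - ψ (X t)) / (2 * η) := h3
    _ = (η * (t - s) + (ψ (X s) - ψ (X t)) / η) / 2 := by ring

end Sol

lemma hasDerivWithinAt_singleton' (f : ℝ → H) (x : ℝ) (v : H) :
    HasDerivWithinAt f v {x} x := by
  simp only [HasDerivWithinAt, nhdsWithin_singleton, hasDerivAtFilter_iff_isLittleO,
    Filter.prod_pure_pure, Asymptotics.isLittleO_pure, sub_self, zero_smul, smul_zero]

lemma sol_zero : Sol ψ x₀ 0 (fun _ => x₀) := by
  refine ⟨rfl, fun t ht => ?_⟩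
  have ht0 : t = 0 := le_antisymm ht.2 ht.1
  subst ht0
  rw [Icc_self]
  exact hasDerivWithinAt_singleton' _ _ _

lemma sol_closed (hψ : ContDiff ℝ 2 ψ) (hbdd : BddBelow (range ψ)) {b : ℝ} (hb : 0 < b)
    (hprev : ∀ b' ∈ Ico (0:ℝ) b, ∃ X, Sol ψ x₀ b' X) : ∃ X, Sol ψ x₀ b X := by
  classical
  have hprev' : ∀ b' : ℝ, ∃ X, (b' ∈ Ico 0 b → Sol ψ x₀ b' X) := by
    intro b'
    by_cases hb' : b' ∈ Ico (0:ℝ) b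
    · obtain ⟨X, hX⟩ := hprev b' hb'; exact ⟨X, fun _ => hX⟩
    · exact ⟨fun _ => x₀, fun h => absurd h hb'⟩
  choose XX hXX using hprev'
  set mid : ℝ → ℝ := fun t => (t + b)/2 with hmid
  have hmid_mem : ∀ t ∈ Ico (0:ℝ) b, mid t ∈ Ico (0:ℝ) b ∧ t < mid t := by
    intro t ht
    refine ⟨⟨by simp only [hmid]; linarith [ht.1], by simp only [hmid]; linarith [ht.2]⟩, ?_⟩
    simp only [hmid]; linarith [ht.2]
  set W : ℝ → H := fun t => XX (mid t) t with hW
  have hagree : ∀ b₁ ∈ Ico (0:ℝ) b, ∀ b₂ ∈ Ico (0:ℝ) b, ∀ t, 0 ≤ t → t ≤ b₁ → t ≤ b₂ →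
      XX b₁ t = XX b₂ t := by
    intro b₁ h1 b₂ h2 t ht0 ht1 ht2
    have hmin0 : 0 ≤ min b₁ b₂ := le_min h1.1 h2.1
    have hs1 := (hXX b₁ h1).mono hmin0 (min_le_left _ _)
    have hs2 := (hXX b₂ h2).mono hmin0 (min_le_right _ _)
    exact Sol.unique hψ hmin0 hs1 hs2 ⟨ht0, le_min ht1 ht2⟩
  have hWeq : ∀ b' ∈ Ico (0:ℝ) b, ∀ t, 0 ≤ t → t ≤ b' → W t = XX b' t := by
    intro b' hb' t ht0 htb'
    have htIco : t ∈ Ico (0:ℝ) b := ⟨ht0, lt_of_le_of_lt htb' hb'.2⟩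
    exact hagree (mid t) (hmid_mem t htIco).1 b' hb' t ht0 (le_of_lt (hmid_mem t htIco).2) htb'
  have hWsol : ∀ b' ∈ Ico (0:ℝ) b, Sol ψ x₀ b' W := by
    intro b' hb'
    constructor
    · rw [hWeq b' hb' 0 le_rfl hb'.1]; exact (hXX b' hb').1
    · intro t ht
      rw [hWeq b' hb' t ht.1 ht.2]
      refine ((hXX b' hb').2 t ht).congr_of_eventuallyEq ?_ (hWeq b' hb' t ht.1 ht.2)
      filter_upwards [self_mem_nhdsWithin] with z hz
      exact hWeq b' hb' z hz.1 hz.2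
  have hWdAt : ∀ t ∈ Ioo (0:ℝ) b, HasDerivAt W (-(gradient ψ (W t))) t := by
    intro t ht
    have htm := hmid_mem t ⟨le_of_lt ht.1, ht.2⟩
    exact (hWsol (mid t) htm.1).hasDerivAt_interior ⟨ht.1, htm.2⟩
  obtain ⟨mψ, hmψ⟩ := hbdd
  have hmlb : ∀ z : H, mψ ≤ ψ z := fun z => hmψ (mem_range_self z)
  set SS : Set ℝ := (fun s => ψ (W s)) '' Ico 0 b with hSS
  have hSSne : SS.Nonempty := ⟨ψ (W 0), 0, ⟨le_rfl, hb⟩, rfl⟩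
  have hSSbdd : BddBelow SS := ⟨mψ, by rintro _ ⟨s, _, rfl⟩; exact hmlb _⟩
  set L := sInf SS with hL
  have hLle : ∀ s ∈ Ico (0:ℝ) b, L ≤ ψ (W s) := fun s hs => csInf_le hSSbdd ⟨s, hs, rfl⟩
  have hkey : ∀ ε > (0:ℝ), ∃ s₀ ∈ Ico (0:ℝ) b, ∀ s t, s₀ ≤ s → s ≤ t → t < b →
      ‖W t - W s‖ < ε := by
    intro ε hε
    set η' : ℝ := ε / (2*(b+1)) with hη'
    have hη'pos : 0 < η' := by
      apply div_pos hε; linarith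
    set η : ℝ := ε * η' / 2 with hη
    have hηpos : 0 < η := by positivity
    have hlt : sInf SS < L + η := by rw [← hL]; linarith
    obtain ⟨v, hvSS, hvlt⟩ := (csInf_lt_iff hSSbdd hSSne).mp hlt
    obtain ⟨s₀, hs₀mem, rfl⟩ := hvSS
    refine ⟨s₀, hs₀mem, ?_⟩
    intro s t hs₀s hst htb
    have hs0 : 0 ≤ s := hs₀mem.1.trans hs₀s
    have htI : t ∈ Ico (0:ℝ) b := ⟨hs0.trans hst, htb⟩
    have hm := hmid_mem t htI
    have hsol := hWsol (mid t) hm.1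
    have h1 : ‖W t - W s‖ ≤ (η' * (t - s) + (ψ (W s) - ψ (W t)) / η') / 2 :=
      hsol.norm_sub_le hψ hs0 hst (le_of_lt hm.2) hη'pos
    have h2 : ψ (W s) ≤ ψ (W s₀) :=
      hsol.psi_antitone hψ hs₀mem.1 hs₀s (hst.trans (le_of_lt hm.2))
    have h3 : L ≤ ψ (W t) := hLle t htI
    have h4 : ψ (W s) - ψ (W t) ≤ η := by linarith
    have h5 : η' * (t - s) ≤ η' * b := by
      apply mul_le_mul_of_nonneg_left _ (le_of_lt hη'pos)
      linarith [htI.2, hs0]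
    have h6 : (ψ (W s) - ψ (W t)) / η' ≤ η / η' :=
      div_le_div_of_nonneg_right h4 hη'pos.le
    have h7 : η / η' = ε / 2 := by
      rw [hη]; field_simp
    have h8 : η' * b < ε / 2 := by
      rw [hη']
      rw [div_mul_eq_mul_div, div_lt_div_iff₀ (by linarith) (by norm_num)]
      nlinarith
    linarith
  have hcauchy : Cauchy (Filter.map W (𝓝[<] b)) := by
    rw [Metric.cauchy_iff]
    refine ⟨Filter.map_neBot, ?_⟩
    intro ε hε
    obtain ⟨s₀, hs₀mem, hbound⟩ := hkey (ε/2) (by linarith)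
    refine ⟨W '' Ioo s₀ b, Filter.image_mem_map (Ioo_mem_nhdsLT_of_mem ⟨hs₀mem.2, le_rfl⟩), ?_⟩
    rintro x ⟨sx, hsx, rfl⟩ y ⟨sy, hsy, rfl⟩
    rcases le_total sx sy with hc | hc
    · rw [dist_eq_norm, norm_sub_rev]
      have := hbound sx sy (le_of_lt hsx.1) hc hsy.2
      linarith
    · rw [dist_eq_norm]
      have := hbound sy sx (le_of_lt hsy.1) hc hsx.2
      linarith
  obtain ⟨z, hz⟩ := CompleteSpace.complete hcauchy
  have hzT : Tendsto W (𝓝[<] b) (𝓝 z) := hz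
  set Wf : ℝ → H := fun t => if t < b then W t else z with hWfdef
  have hWfW : ∀ t, t < b → Wf t = W t := fun t ht => if_pos ht
  have hWfb : Wf b = z := if_neg (lt_irrefl b)
  have hWfT : Tendsto Wf (𝓝[<] b) (𝓝 z) := by
    apply hzT.congr'
    filter_upwards [self_mem_nhdsWithin] with t ht
    exact (hWfW t ht).symm
  refine ⟨Wf, ?_, ?_⟩
  · rw [hWfW 0 hb]; exact (hWsol 0 ⟨le_rfl, hb⟩).1
  · intro t ht
    rcases lt_or_eq_of_le ht.2 with htb | htb
    · -- t < b
      have htI : t ∈ Ico (0:ℝ) b := ⟨ht.1, htb⟩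
      have hm := hmid_mem t htI
      have hmem : Icc 0 (mid t) ∈ 𝓝[Icc 0 b] t := by
        rw [mem_nhdsWithin]
        exact ⟨Iio (mid t), isOpen_Iio, hm.2, fun z hz => ⟨hz.2.1, le_of_lt hz.1⟩⟩
      have hD := ((hWsol (mid t) hm.1).2 t ⟨ht.1, le_of_lt hm.2⟩).mono_of_mem_nhdsWithin hmem
      have hWft : Wf t = W t := hWfW t htb
      rw [hWft]
      refine hD.congr_of_eventuallyEq ?_ hWft
      filter_upwards [hmem] with r hr
      exact hWfW r (lt_of_le_of_lt hr.2 hm.1.2)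
    · -- t = b
      subst htb
      have hWfdAt : ∀ r ∈ Ioo (0:ℝ) t, HasDerivAt Wf (-(gradient ψ (W r))) r := by
        intro r hr
        refine (hWdAt r hr).congr_of_eventuallyEq ?_
        filter_upwards [Iio_mem_nhds hr.2] with u hu
        exact hWfW u hu
      have hdiff : DifferentiableOn ℝ Wf (Ioo 0 t) := fun r hr =>
        ((hWfdAt r hr).differentiableAt).differentiableWithinAt
      have hlim : ContinuousWithinAt Wf (Ioo 0 t) t := by
        have h1 : Tendsto Wf (𝓝[Ioo 0 t] t) (𝓝 (Wf t)) := by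
          rw [hWfb]
          exact hWfT.mono_left (nhdsWithin_mono t Ioo_subset_Iio_self)
        exact h1
      have hsmem : Ioo (0:ℝ) t ∈ 𝓝[<] t := Ioo_mem_nhdsLT_of_mem ⟨hb, le_rfl⟩
      have hlim' : Tendsto (deriv Wf) (𝓝[<] t) (𝓝 (-(gradient ψ z))) := by
        have h2 : Tendsto (fun r => -(gradient ψ (W r))) (𝓝[<] t) (𝓝 (-(gradient ψ z))) :=
          (((contDiff_gradient hψ).continuous.neg).tendsto z).comp hzT
        apply h2.congr'
        filter_upwards [hsmem] with r hr
        exact ((hWfdAt r hr).deriv).symm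
      have hD := hasDerivWithinAt_Iic_of_tendsto_deriv hdiff hlim hsmem hlim'
      have hfin : HasDerivWithinAt Wf (-(gradient ψ (Wf t))) (Iic t) t := by
        rw [hWfb]; exact hD
      exact hfin.mono Icc_subset_Iic_self

lemma exists_sol (hψ : ContDiff ℝ 2 ψ) (hbdd : BddBelow (range ψ)) (x₀ : H)
    (T : ℝ) (hT : 0 ≤ T) : ∃ X, Sol ψ x₀ T X := by
  by_contra hcon
  have hUne : {c : ℝ | 0 ≤ c ∧ ¬ ∃ X, Sol ψ x₀ c X}.Nonempty := ⟨T, hT, hcon⟩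
  have hUbdd : BddBelow {c : ℝ | 0 ≤ c ∧ ¬ ∃ X, Sol ψ x₀ c X} := ⟨0, fun c hc => hc.1⟩
  have hA0 : 0 ≤ sInf {c : ℝ | 0 ≤ c ∧ ¬ ∃ X, Sol ψ x₀ c X} :=
    le_csInf hUne (fun c hc => hc.1)
  have hlt : ∀ c, 0 ≤ c → c < sInf {c : ℝ | 0 ≤ c ∧ ¬ ∃ X, Sol ψ x₀ c X} →
      ∃ X, Sol ψ x₀ c X := by
    intro c hc0 hcA
    by_contra hc
    exact absurd (csInf_le hUbdd ⟨hc0, hc⟩) (not_le.mpr hcA)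
  have hAS : ∃ X, Sol ψ x₀ (sInf {c : ℝ | 0 ≤ c ∧ ¬ ∃ X, Sol ψ x₀ c X}) X := by
    rcases eq_or_lt_of_le hA0 with h0 | h0
    · exact h0 ▸ ⟨fun _ => x₀, sol_zero⟩
    · exact sol_closed hψ hbdd h0 (fun c hc => hlt c hc.1 hc.2)
  obtain ⟨X, hX⟩ := hAS
  obtain ⟨ε, hε, Z, hZ⟩ := hX.extend hψ hA0
  have hfinal : sInf {c : ℝ | 0 ≤ c ∧ ¬ ∃ X, Sol ψ x₀ c X} + ε
      ≤ sInf {c : ℝ | 0 ≤ c ∧ ¬ ∃ X, Sol ψ x₀ c X} := by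
    apply le_csInf hUne
    intro c hc
    by_contra hlt'
    exact hc.2 ⟨Z, hZ.mono hc.1 (le_of_lt (not_le.mp hlt'))⟩
  linarith

set_option maxHeartbeats 2000000 in
theorem grad_mono (hψ : ContDiff ℝ 2 ψ) (hbdd : BddBelow (range ψ))
    (hVconv : ConvexOn ℝ univ (fun x => (1/2 : ℝ) * ‖gradient ψ x‖ ^ 2)) (x y : H) :
    0 ≤ ⟪gradient ψ x - gradient ψ y, x - y⟫ := by
  by_contra hcon
  push_neg at hcon
  set c : ℝ := -⟪gradient ψ x - gradient ψ y, x - y⟫ with hc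
  have hcpos : 0 < c := by simp only [hc]; linarith
  have hxy : x ≠ y := by
    intro h; rw [h] at hcon; simp at hcon
  set r₀ : ℝ := (1/2) * ‖x - y‖^2 with hr₀
  have hr₀pos : 0 < r₀ := by
    have : x - y ≠ 0 := sub_ne_zero_of_ne hxy
    have h2 : 0 < ‖x - y‖ := norm_pos_iff.mpr this
    positivity
  set κ : ℝ := c^2 / (2 * r₀) with hκ
  have hκpos : 0 < κ := by positivity
  obtain ⟨mψ, hmψ⟩ := hbdd
  have hmlb : ∀ z : H, mψ ≤ ψ z := fun z => hmψ (mem_range_self z)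
  set T : ℝ := (2*(ψ x - mψ) + 2*(ψ y - mψ) + 1) / κ with hT
  have hTpos : 0 < T := by
    apply div_pos _ hκpos
    have := hmlb x; have := hmlb y; linarith
  obtain ⟨X, hX⟩ := exists_sol hψ ⟨mψ, hmψ⟩ x T hTpos.le
  obtain ⟨Y, hY⟩ := exists_sol hψ ⟨mψ, hmψ⟩ y T hTpos.le
  set g := gradient ψ with hg
  set G : ℝ → H := fun t => g (X t) - g (Y t) with hG
  set D : ℝ → H := fun t => X t - Y t with hD
  set m : ℝ → ℝ := fun t => ⟪G t, D t⟫ with hm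
  set EG : ℝ → H := fun t =>
    fderiv ℝ g (Y t) (g (Y t)) - fderiv ℝ g (X t) (g (X t)) with hEG
  set Em : ℝ → ℝ := fun t => ⟪G t, -(G t)⟫ + ⟪EG t, D t⟫ with hEm
  have hgdiff := (contDiff_gradient hψ).differentiable one_ne_zero
  -- derivative data on Icc 0 T
  have hmd : ∀ t ∈ Icc (0:ℝ) T, HasDerivWithinAt m (Em t) (Icc 0 T) t := by
    intro t ht
    have hXd := hX.2 t ht
    have hYd := hY.2 t ht
    have hgX := ((hgdiff (X t)).hasFDerivAt).comp_hasDerivWithinAt t hXd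
    have hgY := ((hgdiff (Y t)).hasFDerivAt).comp_hasDerivWithinAt t hYd
    have hGd : HasDerivWithinAt G (EG t) (Icc 0 T) t := by
      have h1 := hgX.sub hgY
      have h2 : (fderiv ℝ g (X t)) (-(g (X t))) - (fderiv ℝ g (Y t)) (-(g (Y t))) = EG t := by
        simp only [map_neg, hEG]; abel
      rwa [h2] at h1
    have hDd : HasDerivWithinAt D (-(G t)) (Icc 0 T) t := by
      have h1 := hXd.sub hYd
      have h2 : -(g (X t)) - -(g (Y t)) = -(G t) := by simp only [hG]; abel
      rwa [h2] at h1
    exact hGd.inner ℝ hDd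
  have hEmle : ∀ t, Em t ≤ -‖G t‖^2 := by
    intro t
    have h1 := gradV_mono hψ hVconv (X t) (Y t)
    have h2 : ⟪EG t, D t⟫ ≤ 0 := by
      have : EG t = -(fderiv ℝ g (X t) (g (X t)) - fderiv ℝ g (Y t) (g (Y t))) := by
        simp only [hEG]; abel
      rw [this, inner_neg_left]
      simpa only [hD] using neg_nonpos_of_nonneg h1
    have h3 : ⟪G t, -(G t)⟫ = -‖G t‖^2 := by
      rw [inner_neg_right, real_inner_self_eq_norm_sq]
    simp only [hEm]; rw [h3]; linarith
  -- m is antitone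
  have hmcont : ContinuousOn m (Icc 0 T) := fun t ht => (hmd t ht).continuousWithinAt
  have hmdAt : ∀ t ∈ Ioo (0:ℝ) T, HasDerivAt m (Em t) t := fun t ht =>
    (hmd t (Ioo_subset_Icc_self ht)).hasDerivAt (Icc_mem_nhds ht.1 ht.2)
  have hmanti : AntitoneOn m (Icc 0 T) := by
    apply antitoneOn_of_deriv_nonpos (convex_Icc 0 T) hmcont
    · intro t ht
      rw [interior_Icc] at ht
      exact (hmdAt t ht).differentiableAt.differentiableWithinAt
    · intro t ht
      rw [interior_Icc] at ht
      rw [(hmdAt t ht).deriv]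
      exact (hEmle t).trans (neg_nonpos_of_nonneg (sq_nonneg _))
  have hm0 : m 0 = -c := by
    simp only [hm, hG, hD, hX.1, hY.1, hc, hg]
    ring
  have hmle : ∀ t ∈ Icc (0:ℝ) T, m t ≤ -c := by
    intro t ht
    rw [← hm0]
    exact hmanti (left_mem_Icc.mpr hTpos.le) ht ht.1
  -- r
  set r : ℝ → ℝ := fun t => (1/2) * ⟪D t, D t⟫ with hr
  have hrd : ∀ t ∈ Icc (0:ℝ) T, HasDerivWithinAt r (-(m t)) (Icc 0 T) t := by
    intro t ht
    have hXd := hX.2 t ht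
    have hYd := hY.2 t ht
    have hDd : HasDerivWithinAt D (-(G t)) (Icc 0 T) t := by
      have h1 := hXd.sub hYd
      have h2 : -(g (X t)) - -(g (Y t)) = -(G t) := by simp only [hG]; abel
      rwa [h2] at h1
    have h1 := (hDd.inner ℝ hDd).const_mul (1/2 : ℝ)
    have h2 : (1/2 : ℝ) * (⟪D t, -(G t)⟫ + ⟪-(G t), D t⟫) = -(m t) := by
      rw [inner_neg_left, inner_neg_right, real_inner_comm]
      simp only [hm]; ring
    rwa [h2] at h1
  have hrcont : ContinuousOn r (Icc 0 T) := fun t ht => (hrd t ht).continuousWithinAt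
  have hrdAt : ∀ t ∈ Ioo (0:ℝ) T, HasDerivAt r (-(m t)) t := fun t ht =>
    (hrd t (Ioo_subset_Icc_self ht)).hasDerivAt (Icc_mem_nhds ht.1 ht.2)
  have hrmono : MonotoneOn r (Icc 0 T) := by
    apply monotoneOn_of_deriv_nonneg (convex_Icc 0 T) hrcont
    · intro t ht
      rw [interior_Icc] at ht
      exact (hrdAt t ht).differentiableAt.differentiableWithinAt
    · intro t ht
      rw [interior_Icc] at ht
      rw [(hrdAt t ht).deriv]
      have := hmle t (Ioo_subset_Icc_self ht)
      linarith
  have hr0 : r 0 = r₀ := by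
    simp only [hr, hD, hX.1, hY.1, hr₀, real_inner_self_eq_norm_sq]
  have hrge : ∀ t ∈ Icc (0:ℝ) T, r₀ ≤ r t := by
    intro t ht
    rw [← hr0]
    exact hrmono (left_mem_Icc.mpr hTpos.le) ht ht.1
  have hrpos : ∀ t ∈ Icc (0:ℝ) T, 0 < r t := fun t ht => lt_of_lt_of_le hr₀pos (hrge t ht)
  -- relation ‖D t‖² = 2 r t  and n² ≤ ‖G‖² (2 r)
  have hDsq : ∀ t, ⟪D t, D t⟫ = ‖D t‖^2 := fun t => real_inner_self_eq_norm_sq _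
  have hnG : ∀ t ∈ Icc (0:ℝ) T, (m t)^2 ≤ ‖G t‖^2 * (2 * r t) := by
    intro t ht
    have h1 : |⟪G t, D t⟫| ≤ ‖G t‖ * ‖D t‖ := abs_real_inner_le_norm _ _
    have h2 : (m t)^2 ≤ (‖G t‖ * ‖D t‖)^2 := by
      obtain ⟨ha, hb⟩ := abs_le.mp h1
      exact sq_le_sq' ha hb
    have h3 : (‖G t‖ * ‖D t‖)^2 = ‖G t‖^2 * ‖D t‖^2 := by ring
    have h4 : ‖D t‖^2 = 2 * r t := by
      rw [← hDsq t]; simp only [hr]; ring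
    rw [h3, h4] at h2
    exact h2
  -- w := n²/r is monotone
  set w : ℝ → ℝ := fun t => (m t)^2 / r t with hw
  have hwd : ∀ t ∈ Icc (0:ℝ) T, HasDerivWithinAt w
      ((2 * m t * Em t * r t - (m t)^2 * (-(m t))) / (r t)^2) (Icc 0 T) t := by
    intro t ht
    have h1 : HasDerivWithinAt (fun t => (m t)^2) (2 * m t * Em t) (Icc 0 T) t := by
      have := (hmd t ht).fun_pow 2
      simpa [mul_comm, mul_assoc, mul_left_comm] using this
    exact h1.div (hrd t ht) (ne_of_gt (hrpos t ht))
  have hwcont : ContinuousOn w (Icc 0 T) := fun t ht => (hwd t ht).continuousWithinAt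
  have hwdAt : ∀ t ∈ Ioo (0:ℝ) T, HasDerivAt w
      ((2 * m t * Em t * r t - (m t)^2 * (-(m t))) / (r t)^2) t := fun t ht =>
    (hwd t (Ioo_subset_Icc_self ht)).hasDerivAt (Icc_mem_nhds ht.1 ht.2)
  have hwmono : MonotoneOn w (Icc 0 T) := by
    apply monotoneOn_of_deriv_nonneg (convex_Icc 0 T) hwcont
    · intro t ht
      rw [interior_Icc] at ht
      exact (hwdAt t ht).differentiableAt.differentiableWithinAt
    · intro t ht
      rw [interior_Icc] at ht
      rw [(hwdAt t ht).deriv]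
      have htI := Ioo_subset_Icc_self ht
      apply div_nonneg _ (sq_nonneg _)
      -- 0 ≤ 2 m Em r + m³ , with m ≤ -c < 0, Em ≤ -‖G‖², m² ≤ ‖G‖² (2r), r > 0
      have h1 := hmle t htI
      have h2 := hEmle t
      have h3 := hnG t htI
      have h4 := hrpos t htI
      have hp : 0 < -(m t) := by linarith
      have e1 : 2 * m t * Em t * r t - m t ^2 * (-(m t))
          = (-(m t)) * (2 * (-(Em t)) * r t - m t^2) := by ring
      rw [e1]
      apply mul_nonneg hp.le
      have e2 : ‖G t‖^2 * (2 * r t) ≤ (-(Em t)) * (2 * r t) := by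
        apply mul_le_mul_of_nonneg_right _ (by linarith)
        linarith
      have e3 := h3.trans e2
      linarith
  have hw0 : w 0 = c^2 / r₀ := by
    simp only [hw, hm0, hr0]; ring_nf
  have hGge : ∀ t ∈ Icc (0:ℝ) T, κ ≤ ‖G t‖^2 := by
    intro t ht
    have h1 : w 0 ≤ w t := hwmono (left_mem_Icc.mpr hTpos.le) ht ht.1
    rw [hw0] at h1
    have h2 := hnG t ht
    have h3 := hrpos t ht
    -- κ = c²/(2 r₀) ≤ m²/(2 r t) ≤ ‖G‖²
    have h4 : (m t)^2 / r t ≤ ‖G t‖^2 * 2 := by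
      rw [div_le_iff₀ h3]; nlinarith
    rw [hκ]
    rw [div_le_iff₀ (by positivity)]
    calc c^2 = (c^2 / r₀) * r₀ := by field_simp
      _ ≤ w t * r₀ := by exact mul_le_mul_of_nonneg_right h1 hr₀pos.le
      _ ≤ (‖G t‖^2 * 2) * r₀ := by
          apply mul_le_mul_of_nonneg_right _ hr₀pos.le
          simpa only [hw] using h4
      _ = ‖G t‖^2 * (2 * r₀) := by ring
  -- energy bounds
  have hcontX : ContinuousOn (fun u => ‖g (X u)‖^2) (Icc 0 T) :=
    (((contDiff_gradient hψ).continuous.comp_continuousOn hX.continuousOn).norm).pow 2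
  have hcontY : ContinuousOn (fun u => ‖g (Y u)‖^2) (Icc 0 T) :=
    (((contDiff_gradient hψ).continuous.comp_continuousOn hY.continuousOn).norm).pow 2
  have hcontG : ContinuousOn (fun u => ‖G u‖^2) (Icc 0 T) := by
    apply ContinuousOn.pow
    apply ContinuousOn.norm
    exact ((contDiff_gradient hψ).continuous.comp_continuousOn hX.continuousOn).sub
      ((contDiff_gradient hψ).continuous.comp_continuousOn hY.continuousOn)
  have hIX : IntervalIntegrable (fun u => ‖g (X u)‖^2) volume 0 T :=
    (hcontX.mono (by rw [uIcc_of_le hTpos.le])).intervalIntegrable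
  have hIY : IntervalIntegrable (fun u => ‖g (Y u)‖^2) volume 0 T :=
    (hcontY.mono (by rw [uIcc_of_le hTpos.le])).intervalIntegrable
  have hIG : IntervalIntegrable (fun u => ‖G u‖^2) volume 0 T :=
    (hcontG.mono (by rw [uIcc_of_le hTpos.le])).intervalIntegrable
  have hEX : (∫ u in (0:ℝ)..T, ‖g (X u)‖^2) ≤ ψ x - mψ := by
    have h1 := hX.psi_integral hψ le_rfl hTpos.le le_rfl
    rw [hX.1] at h1
    have := hmlb (X T)
    linarith
  have hEY : (∫ u in (0:ℝ)..T, ‖g (Y u)‖^2) ≤ ψ y - mψ := by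
    have h1 := hY.psi_integral hψ le_rfl hTpos.le le_rfl
    rw [hY.1] at h1
    have := hmlb (Y T)
    linarith
  have hup : (∫ u in (0:ℝ)..T, ‖G u‖^2)
      ≤ 2 * (ψ x - mψ) + 2 * (ψ y - mψ) := by
    have h1 : (∫ u in (0:ℝ)..T, ‖G u‖^2)
        ≤ ∫ u in (0:ℝ)..T, (2 * ‖g (X u)‖^2 + 2 * ‖g (Y u)‖^2) := by
      apply intervalIntegral.integral_mono_on hTpos.le hIG
        ((hIX.const_mul 2).add (hIY.const_mul 2))
      intro u _
      have h2 : ‖G u‖ ≤ ‖g (X u)‖ + ‖g (Y u)‖ := norm_sub_le _ _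
      have h3 : 0 ≤ ‖G u‖ := norm_nonneg _
      have h4 : ‖G u‖^2 ≤ (‖g (X u)‖ + ‖g (Y u)‖)^2 := by
        nlinarith [mul_self_le_mul_self h3 h2]
      nlinarith [sq_nonneg (‖g (X u)‖ - ‖g (Y u)‖)]
    have h2 : (∫ u in (0:ℝ)..T, (2 * ‖g (X u)‖^2 + 2 * ‖g (Y u)‖^2))
        = 2 * (∫ u in (0:ℝ)..T, ‖g (X u)‖^2) + 2 * (∫ u in (0:ℝ)..T, ‖g (Y u)‖^2) := by
      rw [intervalIntegral.integral_add (hIX.const_mul 2) (hIY.const_mul 2),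
        intervalIntegral.integral_const_mul, intervalIntegral.integral_const_mul]
    rw [h2] at h1
    linarith
  have hlow : κ * T ≤ ∫ u in (0:ℝ)..T, ‖G u‖^2 := by
    have h1 : (∫ _ in (0:ℝ)..T, κ) ≤ ∫ u in (0:ℝ)..T, ‖G u‖^2 := by
      apply intervalIntegral.integral_mono_on hTpos.le intervalIntegrable_const hIG
      intro u hu
      exact hGge u hu
    rw [intervalIntegral.integral_const, smul_eq_mul] at h1
    calc κ * T = (T - 0) * κ := by ring
      _ ≤ _ := h1
  have hκT : κ * T = 2*(ψ x - mψ) + 2*(ψ y - mψ) + 1 := by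
    rw [hT, mul_comm, div_mul_cancel₀ _ (ne_of_gt hκpos)]
  linarith

end Stmt18Aux

set_option maxHeartbeats 1000000 in
/-- Corollary (convexity criterium): if `ψ` is a `C²` function bounded from below and
`V = ½‖∇ψ‖²` is convex, then `ψ` is convex. -/
theorem stmt_18 {H : Type*} [NormedAddCommGroup H] [InnerProductSpace ℝ H] [CompleteSpace H]
    (ψ : H → ℝ) (hψ : ContDiff ℝ 2 ψ)
    (hbdd : BddBelow (range ψ))
    (hVconv : ConvexOn ℝ univ (fun x => (1/2 : ℝ) * ‖gradient ψ x‖ ^ 2)) :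
    ConvexOn ℝ univ ψ := by
  refine ⟨convex_univ, ?_⟩
  intro x _ y _ a b ha hb hab
  set l : ℝ → H := fun t => y + t • (x - y) with hl
  set q : ℝ → ℝ := fun t => ψ (l t) with hq
  have hld : ∀ t : ℝ, HasDerivAt l (x - y) t := by
    intro t
    have := (hasDerivAt_const t y).add ((hasDerivAt_id t).smul_const (x - y))
    simp only [zero_add, one_smul] at this; exact this
  have hqd : ∀ t : ℝ, HasDerivAt q ⟪gradient ψ (l t), x - y⟫ t := by
    intro t
    have h1 := (hasFDerivAt_of_grad hψ (l t)).comp_hasDerivAt t (hld t)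
    rw [InnerProductSpace.toDual_apply_apply] at h1; exact h1
  have hqconv : ConvexOn ℝ univ q := by
    apply MonotoneOn.convexOn_of_deriv convex_univ
    · exact (hψ.continuous.comp ((continuous_const.add
        (continuous_id.smul continuous_const)))).continuousOn
    · intro t _
      exact (hqd t).differentiableAt.differentiableWithinAt
    · rw [interior_univ]
      intro s _ t _ hst
      rw [(hqd s).deriv, (hqd t).deriv]
      rcases eq_or_lt_of_le hst with rfl | hlt
      · exact le_rfl
      · have h1 := grad_mono hψ hbdd hVconv (l t) (l s)
        have h2 : l t - l s = (t - s) • (x - y) := by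
          simp only [hl]
          match_scalars <;> ring
        rw [h2, real_inner_smul_right] at h1
        have h3 : 0 ≤ ⟪gradient ψ (l t) - gradient ψ (l s), x - y⟫ := by
          nlinarith [h1]
        rw [inner_sub_left] at h3
        linarith
  have hpt : a • x + b • y = l a := by
    simp only [hl]
    match_scalars <;> linarith
  have h1 := hqconv.2 (mem_univ (1:ℝ)) (mem_univ (0:ℝ)) ha hb hab
  have hq1 : q 1 = ψ x := by simp [hq, hl]
  have hq0 : q 0 = ψ y := by simp [hq, hl]
  have h2 : a • (1:ℝ) + b • (0:ℝ) = a := by simp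
  rw [h2, hq1, hq0] at h1
  rw [hpt]
  simpa using h1
end
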